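/- arXiv:2205.13364 — 4 statements merged into one kernel-verified Lean document; each statement's English description precedes it below -/
import Mathlib

section
/- Let d ≥ 1 be an integer and σ > 0 a real number with σ d < 2. Then for every ε > 0 there exists a constant C_ε > 0 such that for every continuously differentiable function u : ℝ^d → ℂ with compact support, ‖u‖_{L^{2+2σ}}^{2+2σ} ≤ ε ‖∇u‖_{L²}² + C_ε ‖u‖_{L²}^{2 + 4σ/(2 − σd)}. -/
open MeasureTheory
open ENNReal NNReal Module

/-- Young-type inequality with ε. -/
lemma young_eps {α q K : ℝ} (hα : 0 < α) (hα2 : α < 2) (hK : 0 ≤ K) {ε : ℝ} (hε : 0 < ε) :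
    ∃ C > (0:ℝ), ∀ x y : ℝ, 0 ≤ x → 0 ≤ y →
      K * x ^ α * y ^ (q - α) ≤ ε * x ^ (2:ℝ) + C * y ^ ((q - α) * (2 / (2 - α))) := by
  set p : ℝ := 2 / α with hp
  set p' : ℝ := 2 / (2 - α) with hp'
  have h2α : 0 < 2 - α := by linarith
  have hpq : p.HolderConjugate p' := by
    rw [Real.holderConjugate_iff]; constructor
    · rw [hp, lt_div_iff₀ hα]; linarith
    · rw [hp, hp']; field_simp; ring
  have hp0 : 0 < p := by positivity
  have hp'0 : 0 < p' := by positivity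
  set δ : ℝ := (ε * p) ^ (1 / p) with hδ
  have hδ0 : 0 < δ := by positivity
  have hδp : δ ^ p = ε * p := by
    rw [hδ, ← Real.rpow_mul (by positivity), one_div_mul_cancel hp0.ne', Real.rpow_one]
  refine ⟨(K / δ) ^ p' / p' + 1, by positivity, fun x y hx hy => ?_⟩
  have key := Real.young_inequality (δ * x ^ α) ((K / δ) * y ^ (q - α)) hpq
  rw [abs_of_nonneg (by positivity), abs_of_nonneg (by positivity)] at key
  have e1 : δ * x ^ α * (K / δ * y ^ (q - α)) = K * x ^ α * y ^ (q - α) := by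
    field_simp
  have e2 : (δ * x ^ α) ^ p / p = ε * x ^ (2:ℝ) := by
    rw [Real.mul_rpow hδ0.le (by positivity), ← Real.rpow_mul hx, hδp]
    rw [show α * p = 2 by rw [hp]; field_simp]
    field_simp
  have e3 : (K / δ * y ^ (q - α)) ^ p' / p' =
      ((K / δ) ^ p' / p') * y ^ ((q - α) * (2 / (2 - α))) := by
    rw [Real.mul_rpow (by positivity) (by positivity), ← Real.rpow_mul hy, hp']
    ring
  rw [e1, e2, e3] at key
  refine key.trans ?_
  have : (0:ℝ) ≤ y ^ ((q - α) * (2 / (2 - α))) := by positivity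
  nlinarith

/-- Interpolation (Lyapunov) inequality for lintegrals of powers. -/
lemma lintegral_rpow_interp {X : Type*} [MeasurableSpace X] {μ : Measure X} {f : X → ℝ≥0∞}
    (hf : AEMeasurable f μ) {a b θ : ℝ} (ha : 0 ≤ a) (hb : 0 ≤ b)
    (hθ : 0 < θ) (hθ1 : θ < 1) :
    ∫⁻ x, f x ^ (θ * a + (1 - θ) * b) ∂μ ≤
      (∫⁻ x, f x ^ a ∂μ) ^ θ * (∫⁻ x, f x ^ b ∂μ) ^ (1 - θ) := by
  have h1θ : 0 < 1 - θ := by linarith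
  have hpq : (1/θ).HolderConjugate (1/(1-θ)) := by
    rw [Real.holderConjugate_iff]; constructor
    · rw [lt_div_iff₀ hθ]; linarith
    · field_simp; ring
  calc ∫⁻ x, f x ^ (θ * a + (1 - θ) * b) ∂μ
      = ∫⁻ x, (f x ^ (θ * a)) * (f x ^ ((1 - θ) * b)) ∂μ := by
        congr 1; funext x; rw [ENNReal.rpow_add_of_nonneg _ _ (by positivity) (by positivity)]
    _ ≤ (∫⁻ x, (f x ^ (θ * a)) ^ (1/θ) ∂μ) ^ (θ:ℝ) *
        (∫⁻ x, (f x ^ ((1 - θ) * b)) ^ (1/(1-θ)) ∂μ) ^ ((1-θ):ℝ) := by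
        have := ENNReal.lintegral_mul_le_Lp_mul_Lq μ (f := fun x => f x ^ (θ * a))
          (g := fun x => f x ^ ((1 - θ) * b)) hpq (hf.pow_const _) (hf.pow_const _)
        simpa [one_div_one_div] using this
    _ = (∫⁻ x, f x ^ a ∂μ) ^ θ * (∫⁻ x, f x ^ b ∂μ) ^ (1 - θ) := by
        have e1 : ∀ x, (f x ^ (θ * a)) ^ (1/θ) = f x ^ a := by
          intro x; rw [← ENNReal.rpow_mul]; congr 1; field_simp
        have e2 : ∀ x, (f x ^ ((1 - θ) * b)) ^ (1/(1-θ)) = f x ^ b := by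
          intro x; rw [← ENNReal.rpow_mul]; congr 1; field_simp
        simp_rw [e1, e2]

lemma conj22 : Real.HolderConjugate 2 2 := Real.holderConjugate_iff.mpr ⟨one_lt_two, by norm_num⟩

lemma lintegral_fderiv_normsq_le {X : Type*} [NormedAddCommGroup X] [NormedSpace ℝ X]
    [MeasurableSpace X] [OpensMeasurableSpace X] {μ : Measure X} {u : X → ℂ}
    (hu : ContDiff ℝ 1 u) :
    ∫⁻ x, (‖fderiv ℝ (fun y => ‖u y‖ ^ (2:ℝ)) x‖₊ : ℝ≥0∞) ∂μ ≤
      2 * (∫⁻ x, (‖u x‖₊ : ℝ≥0∞) ^ (2:ℝ) ∂μ) ^ (1/2:ℝ) *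
        (∫⁻ x, (‖fderiv ℝ u x‖₊ : ℝ≥0∞) ^ (2:ℝ) ∂μ) ^ (1/2:ℝ) := by
  have hmeas1 : AEMeasurable (fun x => (‖u x‖₊ : ℝ≥0∞)) μ :=
    (hu.continuous.nnnorm.measurable.coe_nnreal_ennreal).aemeasurable
  have hcont : Continuous (fderiv ℝ u) := hu.continuous_fderiv one_ne_zero
  have hmeas2 : AEMeasurable (fun x => (‖fderiv ℝ u x‖₊ : ℝ≥0∞)) μ :=
    (hcont.nnnorm.measurable.coe_nnreal_ennreal).aemeasurable
  calc ∫⁻ x, (‖fderiv ℝ (fun y => ‖u y‖ ^ (2:ℝ)) x‖₊ : ℝ≥0∞) ∂μ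
      ≤ ∫⁻ x, 2 * ((‖u x‖₊ : ℝ≥0∞) * (‖fderiv ℝ u x‖₊ : ℝ≥0∞)) ∂μ := by
        refine lintegral_mono fun x => ?_
        have h := nnnorm_fderiv_norm_rpow_le (hu.differentiable one_ne_zero)
          (x := x) (p := (2:ℝ≥0)) (by norm_num)
        have hc : (((2:ℝ≥0)):ℝ) = (2:ℝ) := by norm_num
        rw [hc, show ((2:ℝ) - 1) = 1 by norm_num, NNReal.rpow_one] at h
        refine le_trans (ENNReal.coe_le_coe.mpr h) (le_of_eq ?_)
        push_cast
        ring
    _ = 2 * ∫⁻ x, (‖u x‖₊ : ℝ≥0∞) * (‖fderiv ℝ u x‖₊ : ℝ≥0∞) ∂μ :=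
        lintegral_const_mul' _ _ (by norm_num)
    _ ≤ 2 * ((∫⁻ x, (‖u x‖₊ : ℝ≥0∞) ^ (2:ℝ) ∂μ) ^ (1/2:ℝ) *
        (∫⁻ x, (‖fderiv ℝ u x‖₊ : ℝ≥0∞) ^ (2:ℝ) ∂μ) ^ (1/2:ℝ)) := by
        gcongr
        simpa using ENNReal.lintegral_mul_le_Lp_mul_Lq μ conj22 hmeas1 hmeas2
    _ = _ := by ring



noncomputable def L1 : ℝ →L[ℝ] EuclideanSpace ℝ (Fin 1) :=
  ((EuclideanSpace.equiv (Fin 1) ℝ).symm : (Fin 1 → ℝ) →L[ℝ] EuclideanSpace ℝ (Fin 1)).comp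
    (ContinuousLinearMap.pi fun _ => ContinuousLinearMap.id ℝ ℝ)

lemma L1_norm (t : ℝ) : ‖L1 t‖ = |t| := by
  rw [EuclideanSpace.norm_eq]
  simp only [Fin.sum_univ_one]
  show √(‖t‖ ^ 2) = |t|
  rw [Real.norm_eq_abs, sq_abs, Real.sqrt_sq_eq_abs]

lemma L1_nnnorm_le : ‖L1‖₊ ≤ 1 := by
  refine ContinuousLinearMap.opNNNorm_le_bound _ 1 (fun t => ?_)
  rw [← NNReal.coe_le_coe]
  push_cast
  rw [L1_norm, Real.norm_eq_abs]
  simp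

lemma L1_measurePreserving : MeasurePreserving (fun t => L1 t) volume volume :=
  ((EuclideanSpace.volume_preserving_symm_measurableEquiv_toLp (Fin 1)).symm _).comp
    ((volume_preserving_funUnique (Fin 1) ℝ).symm _)

lemma L1_surj (x : EuclideanSpace ℝ (Fin 1)) : L1 (x 0) = x := by
  ext i
  obtain rfl : i = 0 := Subsingleton.elim _ _
  rfl

lemma core1 (σ : ℝ) (hσ : 0 < σ) (hσ2 : σ < 2) :
    ∃ K : ℝ≥0∞, K ≠ ∞ ∧ ∀ u : EuclideanSpace ℝ (Fin 1) → ℂ,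
      ContDiff ℝ 1 u → HasCompactSupport u →
      ∫⁻ x, (‖u x‖₊ : ℝ≥0∞) ^ (2 + 2*σ) ≤
        K * (∫⁻ x, (‖fderiv ℝ u x‖₊ : ℝ≥0∞) ^ (2:ℝ)) ^ (σ/2) *
          (∫⁻ x, (‖u x‖₊ : ℝ≥0∞) ^ (2:ℝ)) ^ ((2+σ)/2) := by
  refine ⟨(2:ℝ≥0∞) ^ σ, ENNReal.rpow_ne_top_of_nonneg hσ.le (by norm_num),
    fun u hu h2u => ?_⟩
  set J2 := ∫⁻ x, (‖u x‖₊ : ℝ≥0∞) ^ (2:ℝ) with hJ2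
  set G2 := ∫⁻ x, (‖fderiv ℝ u x‖₊ : ℝ≥0∞) ^ (2:ℝ) with hG2
  set g : ℝ → ℂ := fun t => u (L1 t) with hg
  have hgc : ContDiff ℝ 1 g := hu.comp L1.contDiff
  have h2g : HasCompactSupport g :=
    h2u.comp_homeomorph ((Homeomorph.funUnique (Fin 1) ℝ).symm.trans
      (EuclideanSpace.equiv (Fin 1) ℝ).toHomeomorph.symm)
  have hgder : ∀ t, ‖fderiv ℝ g t‖₊ ≤ ‖fderiv ℝ u (L1 t)‖₊ := by
    intro t
    have h1 : HasFDerivAt g ((fderiv ℝ u (L1 t)).comp L1) t :=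
      ((hu.differentiable one_ne_zero (L1 t)).hasFDerivAt).comp t L1.hasFDerivAt
    rw [h1.fderiv]
    calc ‖(fderiv ℝ u (L1 t)).comp L1‖₊ ≤ ‖fderiv ℝ u (L1 t)‖₊ * ‖L1‖₊ :=
        ContinuousLinearMap.opNNNorm_comp_le _ _
      _ ≤ ‖fderiv ℝ u (L1 t)‖₊ * 1 := by gcongr; exact L1_nnnorm_le
      _ = _ := mul_one _
  have hmeas2 : Measurable (fun x : EuclideanSpace ℝ (Fin 1) => (‖u x‖₊ : ℝ≥0∞) ^ (2:ℝ)) :=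
    (hu.continuous.nnnorm.measurable.coe_nnreal_ennreal).pow_const _
  have hmeasG : Measurable
      (fun x : EuclideanSpace ℝ (Fin 1) => (‖fderiv ℝ u x‖₊ : ℝ≥0∞) ^ (2:ℝ)) :=
    (((hu.continuous_fderiv one_ne_zero).nnnorm.measurable).coe_nnreal_ennreal).pow_const _
  have htrans2 : ∫⁻ t, (‖g t‖₊ : ℝ≥0∞) ^ (2:ℝ) = J2 :=
    L1_measurePreserving.lintegral_comp hmeas2
  have htransG : ∫⁻ t, (‖fderiv ℝ g t‖₊ : ℝ≥0∞) ^ (2:ℝ) ≤ G2 := by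
    calc ∫⁻ t, (‖fderiv ℝ g t‖₊ : ℝ≥0∞) ^ (2:ℝ)
        ≤ ∫⁻ t, (‖fderiv ℝ u (L1 t)‖₊ : ℝ≥0∞) ^ (2:ℝ) := by
          refine lintegral_mono fun t => ?_
          exact ENNReal.rpow_le_rpow (ENNReal.coe_le_coe.mpr (hgder t)) (by norm_num)
      _ = G2 := L1_measurePreserving.lintegral_comp hmeasG
  set S := 2 * J2 ^ (1/2:ℝ) * G2 ^ (1/2:ℝ) with hS
  have hsup : ∀ t₀ : ℝ, (‖g t₀‖₊ : ℝ≥0∞) ^ (2:ℝ) ≤ S := by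
    intro t₀
    have hv : ContDiff ℝ 1 (fun t => ‖g t‖ ^ (2:ℝ)) := hgc.norm_rpow one_lt_two
    have h2v : HasCompactSupport (fun t => ‖g t‖ ^ (2:ℝ)) :=
      h2g.norm.rpow_const (by norm_num)
    have hftc := HasCompactSupport.enorm_le_lintegral_Ici_deriv hv h2v t₀
    have hlhs : (‖(fun t => ‖g t‖ ^ (2:ℝ)) t₀‖₊ : ℝ≥0∞) = (‖g t₀‖₊ : ℝ≥0∞) ^ (2:ℝ) := by
      show ((‖(‖g t₀‖ ^ (2:ℝ))‖₊ : ℝ≥0) : ℝ≥0∞) = _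
      rw [Real.nnnorm_rpow_of_nonneg (norm_nonneg _), nnnorm_norm,
        ENNReal.coe_rpow_of_nonneg _ (by norm_num : (0:ℝ) ≤ 2)]
    calc (‖g t₀‖₊ : ℝ≥0∞) ^ (2:ℝ)
        ≤ ∫⁻ s in Set.Iic t₀, ‖deriv (fun t => ‖g t‖ ^ (2:ℝ)) s‖₊ := by rw [← hlhs]; exact hftc
      _ ≤ ∫⁻ s, ‖deriv (fun t => ‖g t‖ ^ (2:ℝ)) s‖₊ :=
          lintegral_mono' Measure.restrict_le_self le_rfl
      _ ≤ ∫⁻ s, ‖fderiv ℝ (fun t => ‖g t‖ ^ (2:ℝ)) s‖₊ := by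
          refine lintegral_mono fun s => ?_
          have hd : deriv (fun t => ‖g t‖ ^ (2:ℝ)) s =
              fderiv ℝ (fun t => ‖g t‖ ^ (2:ℝ)) s 1 := fderiv_apply_one_eq_deriv.symm
          rw [hd]
          have := (fderiv ℝ (fun t => ‖g t‖ ^ (2:ℝ)) s).le_opNNNorm 1
          simp only [nnnorm_one, mul_one] at this
          exact ENNReal.coe_le_coe.mpr this
      _ ≤ 2 * (∫⁻ t, (‖g t‖₊ : ℝ≥0∞) ^ (2:ℝ)) ^ (1/2:ℝ) *
          (∫⁻ t, (‖fderiv ℝ g t‖₊ : ℝ≥0∞) ^ (2:ℝ)) ^ (1/2:ℝ) :=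
          lintegral_fderiv_normsq_le hgc
      _ ≤ S := by
          rw [hS, htrans2]
          gcongr
  have key : ∀ x, (‖u x‖₊ : ℝ≥0∞) ^ (2 + 2*σ) ≤ S ^ σ * (‖u x‖₊ : ℝ≥0∞) ^ (2:ℝ) := by
    intro x
    have hx : (‖u x‖₊ : ℝ≥0∞) ^ (2:ℝ) ≤ S := by
      have h := hsup (x 0)
      simp only [hg] at h
      rwa [L1_surj x] at h
    calc (‖u x‖₊ : ℝ≥0∞) ^ (2 + 2*σ)
        = ((‖u x‖₊ : ℝ≥0∞) ^ (2:ℝ)) ^ σ * (‖u x‖₊ : ℝ≥0∞) ^ (2:ℝ) := by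
          rw [← ENNReal.rpow_mul,
            ← ENNReal.rpow_add_of_nonneg _ _ (by positivity) (by norm_num)]
          ring_nf
      _ ≤ S ^ σ * (‖u x‖₊ : ℝ≥0∞) ^ (2:ℝ) := by gcongr
  calc ∫⁻ x, (‖u x‖₊ : ℝ≥0∞) ^ (2 + 2*σ)
      ≤ ∫⁻ x, S ^ σ * (‖u x‖₊ : ℝ≥0∞) ^ (2:ℝ) := lintegral_mono key
    _ = S ^ σ * J2 := lintegral_const_mul _ hmeas2
    _ = (2:ℝ≥0∞) ^ σ * J2 ^ (σ/2) * G2 ^ (σ/2) * J2 ^ (1:ℝ) := by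
        rw [ENNReal.rpow_one, hS, ENNReal.mul_rpow_of_nonneg _ _ hσ.le,
          ENNReal.mul_rpow_of_nonneg _ _ hσ.le, ← ENNReal.rpow_mul, ← ENNReal.rpow_mul]
        rw [show (1/2:ℝ) * σ = σ/2 by ring]
    _ = (2:ℝ≥0∞) ^ σ * G2 ^ (σ/2) * (J2 ^ (σ/2) * J2 ^ (1:ℝ)) := by ring
    _ = (2:ℝ≥0∞) ^ σ * G2 ^ (σ/2) * J2 ^ ((2+σ)/2) := by
        rw [← ENNReal.rpow_add_of_nonneg _ _ (by positivity) (by norm_num)]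
        rw [show σ/2 + 1 = (2+σ)/2 by ring]

lemma core2 (σ : ℝ) (hσ : 0 < σ) (hσ1 : σ < 1) :
    ∃ K : ℝ≥0∞, K ≠ ∞ ∧ ∀ u : EuclideanSpace ℝ (Fin 2) → ℂ,
      ContDiff ℝ 1 u → HasCompactSupport u →
      ∫⁻ x, (‖u x‖₊ : ℝ≥0∞) ^ (2 + 2*σ) ≤
        K * (∫⁻ x, (‖fderiv ℝ u x‖₊ : ℝ≥0∞) ^ (2:ℝ)) ^ σ *
          (∫⁻ x, (‖u x‖₊ : ℝ≥0∞) ^ (2:ℝ)) ^ (1:ℝ) := by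
  set C₀ : ℝ≥0 := lintegralPowLePowLIntegralFDerivConst
    (volume : Measure (EuclideanSpace ℝ (Fin 2))) 2 with hC₀
  refine ⟨((4 * C₀ : ℝ≥0∞)) ^ σ, ENNReal.rpow_ne_top_of_nonneg hσ.le (by
    simp [ENNReal.mul_ne_top]), fun u hu h2u => ?_⟩
  set J2 := ∫⁻ x, (‖u x‖₊ : ℝ≥0∞) ^ (2:ℝ) with hJ2
  set G2 := ∫⁻ x, (‖fderiv ℝ u x‖₊ : ℝ≥0∞) ^ (2:ℝ) with hG2
  set J4 := ∫⁻ x, (‖u x‖₊ : ℝ≥0∞) ^ (4:ℝ) with hJ4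
  have hmeasu : AEMeasurable (fun x => (‖u x‖₊ : ℝ≥0∞)) volume :=
    (hu.continuous.nnnorm.measurable.coe_nnreal_ennreal).aemeasurable
  -- Ladyzhenskaya
  have hv : ContDiff ℝ 1 (fun x => ‖u x‖ ^ (2:ℝ)) := hu.norm_rpow one_lt_two
  have h2v : HasCompactSupport (fun x => ‖u x‖ ^ (2:ℝ)) :=
    h2u.norm.rpow_const (by norm_num)
  have hp : Real.HolderConjugate (finrank ℝ (EuclideanSpace ℝ (Fin 2))) 2 := by
    rw [finrank_euclideanSpace_fin]; exact_mod_cast conj22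
  have GNS := lintegral_pow_le_pow_lintegral_fderiv volume hv h2v hp
  have hLHS : ∫⁻ x, (‖(fun y => ‖u y‖ ^ (2:ℝ)) x‖₊ : ℝ≥0∞) ^ (2:ℝ) = J4 := by
    rw [hJ4]
    congr 1; funext x
    rw [Real.nnnorm_rpow_of_nonneg (norm_nonneg _), nnnorm_norm,
      ENNReal.coe_rpow_of_nonneg _ (by norm_num : (0:ℝ) ≤ 2), ← ENNReal.rpow_mul]
    norm_num
  have hlady : J4 ≤ 4 * C₀ * J2 * G2 := by
    calc J4 = ∫⁻ x, (‖(fun y => ‖u y‖ ^ (2:ℝ)) x‖₊ : ℝ≥0∞) ^ (2:ℝ) := hLHS.symm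
      _ ≤ C₀ * (∫⁻ x, (‖fderiv ℝ (fun y => ‖u y‖ ^ (2:ℝ)) x‖₊ : ℝ≥0∞)) ^ (2:ℝ) := GNS
      _ ≤ C₀ * (2 * J2 ^ (1/2:ℝ) * G2 ^ (1/2:ℝ)) ^ (2:ℝ) := by
          gcongr
          exact lintegral_fderiv_normsq_le hu
      _ = 4 * C₀ * J2 * G2 := by
          rw [ENNReal.mul_rpow_of_nonneg _ _ (by norm_num : (0:ℝ) ≤ 2),
            ENNReal.mul_rpow_of_nonneg _ _ (by norm_num : (0:ℝ) ≤ 2),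
            ← ENNReal.rpow_mul, ← ENNReal.rpow_mul]
          norm_num
          ring
  -- interpolation
  have hinterp : ∫⁻ x, (‖u x‖₊ : ℝ≥0∞) ^ (2 + 2*σ) ≤ J2 ^ (1-σ) * J4 ^ σ := by
    have h := lintegral_rpow_interp (μ := volume) hmeasu
      (a := 2) (b := 4) (θ := 1 - σ) (by norm_num) (by norm_num)
      (by linarith) (by linarith)
    rw [show (1-σ) * 2 + (1-(1-σ)) * 4 = 2 + 2*σ by ring, show (1 - (1-σ)) = σ by ring] at h
    exact h
  calc ∫⁻ x, (‖u x‖₊ : ℝ≥0∞) ^ (2 + 2*σ) ≤ J2 ^ (1-σ) * J4 ^ σ := hinterp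
    _ ≤ J2 ^ (1-σ) * (4 * C₀ * J2 * G2) ^ σ := by gcongr
    _ = ((4 * C₀ : ℝ≥0∞)) ^ σ * G2 ^ σ * (J2 ^ (1-σ) * J2 ^ σ) := by
        rw [ENNReal.mul_rpow_of_nonneg _ _ hσ.le, ENNReal.mul_rpow_of_nonneg _ _ hσ.le]
        ring
    _ = ((4 * C₀ : ℝ≥0∞)) ^ σ * G2 ^ σ * J2 ^ (1:ℝ) := by
        rw [← ENNReal.rpow_add_of_nonneg _ _ (by linarith) hσ.le]
        norm_num


lemma core3 (d : ℕ) (hd3 : 3 ≤ d) (σ : ℝ) (hσ : 0 < σ) (hσd : σ * d < 2) :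
    ∃ K : ℝ≥0∞, K ≠ ∞ ∧ ∀ u : EuclideanSpace ℝ (Fin d) → ℂ,
      ContDiff ℝ 1 u → HasCompactSupport u →
      ∫⁻ x, (‖u x‖₊ : ℝ≥0∞) ^ (2 + 2*σ) ≤
        K * (∫⁻ x, (‖fderiv ℝ u x‖₊ : ℝ≥0∞) ^ (2:ℝ)) ^ (σ * d / 2) *
          (∫⁻ x, (‖u x‖₊ : ℝ≥0∞) ^ (2:ℝ)) ^ ((2 + 2*σ - σ*d)/2) := by
  set n : ℝ := (d : ℝ) with hn
  have hn3 : (3:ℝ) ≤ n := by rw [hn]; exact_mod_cast hd3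
  have hn2 : (0:ℝ) < n - 2 := by linarith
  set p'r : ℝ := 2 * n / (n - 2) with hp'r
  have hp'rpos : 0 < p'r := by positivity
  set p' : ℝ≥0 := p'r.toNNReal with hp'def
  have hp'coe : (p' : ℝ) = p'r := Real.coe_toNNReal _ hp'rpos.le
  have hp'0 : p' ≠ 0 := by
    simp only [hp'def, ne_eq, Real.toNNReal_eq_zero, not_le]; exact hp'rpos
  set C : ℝ≥0 := SNormLESNormFDerivOfEqConst ℂ (volume : Measure (EuclideanSpace ℝ (Fin d)))
    (((2:ℝ≥0)):ℝ) with hCdef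
  refine ⟨((C : ℝ≥0∞)) ^ (σ * n), ENNReal.rpow_ne_top_of_nonneg (by positivity)
    ENNReal.coe_ne_top, fun u hu h2u => ?_⟩
  set J2 := ∫⁻ x, (‖u x‖₊ : ℝ≥0∞) ^ (2:ℝ) with hJ2
  set G2 := ∫⁻ x, (‖fderiv ℝ u x‖₊ : ℝ≥0∞) ^ (2:ℝ) with hG2
  set Jp' := ∫⁻ x, (‖u x‖₊ : ℝ≥0∞) ^ p'r with hJp'
  have hfrk : finrank ℝ (EuclideanSpace ℝ (Fin d)) = d := finrank_euclideanSpace_fin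
  have hfrkpos : 0 < finrank ℝ (EuclideanSpace ℝ (Fin d)) := by omega
  have hp' : ((p' : ℝ))⁻¹ = ((2:ℝ≥0) : ℝ)⁻¹ - ((finrank ℝ (EuclideanSpace ℝ (Fin d)) : ℝ))⁻¹ := by
    rw [hp'coe, hfrk, hp'r, ← hn]
    push_cast
    field_simp
  have GNS := eLpNorm_le_eLpNorm_fderiv_of_eq (volume : Measure (EuclideanSpace ℝ (Fin d)))
    hu h2u (p := 2) (p' := p') (by norm_num) hfrkpos hp'
  -- rewrite eLpNorms as lintegrals
  have he1 : eLpNorm u (p' : ℝ≥0∞) volume = Jp' ^ (1 / p'r) := by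
    rw [eLpNorm_eq_lintegral_rpow_enorm_toReal (by exact_mod_cast hp'0) ENNReal.coe_ne_top]
    rw [ENNReal.coe_toReal, hp'coe, one_div]; rfl
  have he2 : eLpNorm (fderiv ℝ u) ((2:ℝ≥0) : ℝ≥0∞) volume = G2 ^ (1/2 : ℝ) := by
    rw [eLpNorm_eq_lintegral_rpow_enorm_toReal (by norm_num) (by norm_num)]
    rw [show (((2:ℝ≥0) : ℝ≥0∞)).toReal = (2:ℝ) by norm_num]; rfl
  rw [he1, he2] at GNS
  have hJp'le : Jp' ≤ ((C : ℝ≥0∞) * G2 ^ (1/2:ℝ)) ^ p'r := by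
    calc Jp' = (Jp' ^ (1/p'r)) ^ p'r := by
          rw [← ENNReal.rpow_mul, one_div, inv_mul_cancel₀ hp'rpos.ne', ENNReal.rpow_one]
      _ ≤ ((C : ℝ≥0∞) * G2 ^ (1/2:ℝ)) ^ p'r := by gcongr
  -- interpolation
  set θ : ℝ := (2 + 2*σ - σ*n)/2 with hθdef
  have hσn2 : σ * n < 2 := by rw [hn]; exact hσd
  have hθpos : 0 < θ := by rw [hθdef]; linarith
  have h1θ : 1 - θ = σ * (n - 2) / 2 := by rw [hθdef]; ring
  have h1θpos : 0 < 1 - θ := by rw [h1θ]; positivity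
  have hθ1 : θ < 1 := by linarith
  have hmeasu : AEMeasurable (fun x => (‖u x‖₊ : ℝ≥0∞))
      (volume : Measure (EuclideanSpace ℝ (Fin d))) :=
    (hu.continuous.nnnorm.measurable.coe_nnreal_ennreal).aemeasurable
  have hexp : θ * 2 + (1 - θ) * p'r = 2 + 2*σ := by
    rw [hθdef, hp'r]
    field_simp
    ring
  have hinterp : ∫⁻ x, (‖u x‖₊ : ℝ≥0∞) ^ (2 + 2*σ) ≤ J2 ^ θ * Jp' ^ (1 - θ) := by
    have h := lintegral_rpow_interp (μ := volume) hmeasu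
      (a := 2) (b := p'r) (θ := θ) (by norm_num) hp'rpos.le hθpos hθ1
    rw [hexp] at h
    exact h
  have hpow : p'r * (1 - θ) = σ * n := by
    rw [h1θ, hp'r]
    field_simp
  calc ∫⁻ x, (‖u x‖₊ : ℝ≥0∞) ^ (2 + 2*σ) ≤ J2 ^ θ * Jp' ^ (1 - θ) := hinterp
    _ ≤ J2 ^ θ * (((C : ℝ≥0∞) * G2 ^ (1/2:ℝ)) ^ p'r) ^ (1 - θ) := by gcongr
    _ = (C : ℝ≥0∞) ^ (σ * n) * G2 ^ (σ * n / 2) * J2 ^ θ := by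
        rw [← ENNReal.rpow_mul, hpow,
          ENNReal.mul_rpow_of_nonneg _ _ (by positivity : (0:ℝ) ≤ σ * n),
          ← ENNReal.rpow_mul]
        rw [show (1/2:ℝ) * (σ * n) = σ * n / 2 by ring]
        ring
    _ = _ := by rw [hθdef]

lemma glue (d : ℕ) (hd : 1 ≤ d) (σ : ℝ) (hσ : 0 < σ) (hσd : σ * d < 2)
    (K : ℝ≥0∞) (hK : K ≠ ∞)
    (hcore : ∀ u : EuclideanSpace ℝ (Fin d) → ℂ, ContDiff ℝ 1 u → HasCompactSupport u →
      ∫⁻ x, (‖u x‖₊ : ℝ≥0∞) ^ (2 + 2*σ) ≤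
        K * (∫⁻ x, (‖fderiv ℝ u x‖₊ : ℝ≥0∞) ^ (2:ℝ)) ^ (σ * d / 2) *
          (∫⁻ x, (‖u x‖₊ : ℝ≥0∞) ^ (2:ℝ)) ^ ((2 + 2*σ - σ*d)/2)) :
    ∀ ε > (0 : ℝ), ∃ C > (0 : ℝ), ∀ u : EuclideanSpace ℝ (Fin d) → ℂ,
      ContDiff ℝ 1 u → HasCompactSupport u →
      (eLpNorm u (ENNReal.ofReal (2 + 2 * σ)) volume).toReal ^ (2 + 2 * σ) ≤
        ε * (eLpNorm (fun x => ‖fderiv ℝ u x‖) 2 volume).toReal ^ (2 : ℝ) +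
          C * (eLpNorm u 2 volume).toReal ^ (2 + 4 * σ / (2 - σ * d)) := by
  intro ε hε
  set α : ℝ := σ * d with hα
  have hd1 : (1:ℝ) ≤ (d:ℝ) := by exact_mod_cast hd
  have hα0 : 0 < α := by rw [hα]; positivity
  have hα2 : α < 2 := hσd
  have hq₀ : (0:ℝ) < 2 + 2*σ := by linarith
  have hqα : (0:ℝ) < 2 + 2*σ - α := by nlinarith
  obtain ⟨C, hC, hyoung⟩ := young_eps (q := 2 + 2*σ) hα0 hα2 ENNReal.toReal_nonneg (K := K.toReal) hε
  refine ⟨C, hC, fun u hu h2u => ?_⟩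
  set J2 := ∫⁻ x, (‖u x‖₊ : ℝ≥0∞) ^ (2:ℝ) with hJ2
  set G2 := ∫⁻ x, (‖fderiv ℝ u x‖₊ : ℝ≥0∞) ^ (2:ℝ) with hG2
  set Jq := ∫⁻ x, (‖u x‖₊ : ℝ≥0∞) ^ (2 + 2*σ) with hJq
  -- finiteness
  have hJ2fin : J2 ≠ ∞ := by
    have h := (hu.continuous.memLp_of_hasCompactSupport (μ := volume) h2u
      (p := 2)).eLpNorm_lt_top
    have h2 := lintegral_rpow_enorm_lt_top_of_eLpNorm_lt_top (f := u)
      (by norm_num : (2:ℝ≥0∞) ≠ 0) (by norm_num) h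
    rw [show ((2:ℝ≥0∞)).toReal = (2:ℝ) by norm_num] at h2
    exact h2.ne
  have hG2fin : G2 ≠ ∞ := by
    have hc : Continuous (fderiv ℝ u) := hu.continuous_fderiv one_ne_zero
    have h := (hc.memLp_of_hasCompactSupport (μ := volume) (h2u.fderiv (𝕜 := ℝ))
      (p := 2)).eLpNorm_lt_top
    have h2 := lintegral_rpow_enorm_lt_top_of_eLpNorm_lt_top (f := fderiv ℝ u)
      (by norm_num : (2:ℝ≥0∞) ≠ 0) (by norm_num) h
    rw [show ((2:ℝ≥0∞)).toReal = (2:ℝ) by norm_num] at h2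
    exact h2.ne
  -- eLpNorm identities
  have hq'0 : (ENNReal.ofReal (2 + 2*σ)) ≠ 0 := by
    simp only [ne_eq, ENNReal.ofReal_eq_zero, not_le]; linarith
  have hq'top : (ENNReal.ofReal (2 + 2*σ)) ≠ ∞ := ENNReal.ofReal_ne_top
  have hq'toReal : (ENNReal.ofReal (2 + 2*σ)).toReal = 2 + 2*σ := ENNReal.toReal_ofReal hq₀.le
  have hA : (eLpNorm u (ENNReal.ofReal (2 + 2 * σ)) volume).toReal ^ (2 + 2*σ) = Jq.toReal := by
    rw [eLpNorm_eq_lintegral_rpow_enorm_toReal hq'0 hq'top, hq'toReal, one_div, ENNReal.toReal_rpow,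
      ← ENNReal.rpow_mul, inv_mul_cancel₀ hq₀.ne', ENNReal.rpow_one]; rfl
  have hB : (eLpNorm (fun x => ‖fderiv ℝ u x‖) 2 volume).toReal = G2.toReal ^ (1/2:ℝ) := by
    rw [eLpNorm_norm, eLpNorm_eq_lintegral_rpow_enorm_toReal (by norm_num) (by norm_num),
      show ((2:ℝ≥0∞)).toReal = (2:ℝ) by norm_num, ← ENNReal.toReal_rpow]; rfl
  have hD : (eLpNorm u 2 volume).toReal = J2.toReal ^ (1/2:ℝ) := by
    rw [eLpNorm_eq_lintegral_rpow_enorm_toReal (by norm_num) (by norm_num),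
      show ((2:ℝ≥0∞)).toReal = (2:ℝ) by norm_num, ← ENNReal.toReal_rpow]; rfl
  -- main chain
  have step1 : Jq.toReal ≤ K.toReal * G2.toReal ^ (α/2) * J2.toReal ^ ((2 + 2*σ - α)/2) := by
    have h := hcore u hu h2u
    have hne : K * G2 ^ (α/2) * J2 ^ ((2 + 2*σ - α)/2) ≠ ∞ :=
      ENNReal.mul_ne_top (ENNReal.mul_ne_top hK
        (ENNReal.rpow_ne_top_of_nonneg (by positivity) hG2fin))
        (ENNReal.rpow_ne_top_of_nonneg (by positivity) hJ2fin)
    calc Jq.toReal ≤ (K * G2 ^ (α/2) * J2 ^ ((2 + 2*σ - α)/2)).toReal :=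
          ENNReal.toReal_mono hne h
      _ = K.toReal * G2.toReal ^ (α/2) * J2.toReal ^ ((2 + 2*σ - α)/2) := by
          rw [ENNReal.toReal_mul, ENNReal.toReal_mul, ← ENNReal.toReal_rpow,
            ← ENNReal.toReal_rpow]
  have hy := hyoung (G2.toReal ^ (1/2:ℝ)) (J2.toReal ^ (1/2:ℝ)) (by positivity) (by positivity)
  have e1 : (G2.toReal ^ (1/2:ℝ)) ^ α = G2.toReal ^ (α/2) := by
    rw [← Real.rpow_mul ENNReal.toReal_nonneg, show (1/2:ℝ)*α = α/2 by ring]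
  have e2 : (J2.toReal ^ (1/2:ℝ)) ^ (2 + 2*σ - α) = J2.toReal ^ ((2 + 2*σ - α)/2) := by
    rw [← Real.rpow_mul ENNReal.toReal_nonneg, show (1/2:ℝ)*(2+2*σ-α) = (2+2*σ-α)/2 by ring]
  have e3 : (G2.toReal ^ (1/2:ℝ)) ^ (2:ℝ) = G2.toReal := by
    rw [← Real.rpow_mul ENNReal.toReal_nonneg]; norm_num
  have e4 : (2 + 2*σ - α) * (2 / (2 - α)) = 2 + 4 * σ / (2 - α) := by
    have h2α : (2:ℝ) - α ≠ 0 := by intro h; linarith [hα2]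
    field_simp
    ring
  rw [e4] at hy
  rw [hA, hB, hD]
  refine le_trans ?_ hy
  rw [e1, e2]
  exact step1


/-- Young-type consequence of Gagliardo–Nirenberg: for σd < 2 and every ε > 0 there is C_ε with
`‖u‖_{L^{2+2σ}}^{2+2σ} ≤ ε ‖∇u‖_{L²}² + C_ε ‖u‖_{L²}^{2+4σ/(2−σd)}`. -/
theorem stmt3 (d : ℕ) (hd : 1 ≤ d) (σ : ℝ) (hσ : 0 < σ) (hσd : σ * d < 2) :
    ∀ ε > (0 : ℝ), ∃ C > (0 : ℝ), ∀ u : EuclideanSpace ℝ (Fin d) → ℂ,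
      ContDiff ℝ 1 u → HasCompactSupport u →
      (eLpNorm u (ENNReal.ofReal (2 + 2 * σ)) volume).toReal ^ (2 + 2 * σ) ≤
        ε * (eLpNorm (fun x => ‖fderiv ℝ u x‖) 2 volume).toReal ^ (2 : ℝ) +
          C * (eLpNorm u 2 volume).toReal ^ (2 + 4 * σ / (2 - σ * d)) := by
  obtain h1 | h2 | h3 : d = 1 ∨ d = 2 ∨ 3 ≤ d := by omega
  · subst h1
    have hσ2 : σ < 2 := by
      have h := hσd; push_cast at h; linarith
    obtain ⟨K, hK, hcore⟩ := core1 σ hσ hσ2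
    refine glue 1 le_rfl σ hσ hσd K hK (fun u hu h2u => ?_)
    have h := hcore u hu h2u
    rw [show σ * ((1:ℕ):ℝ) / 2 = σ/2 by push_cast; ring,
        show (2 + 2*σ - σ*((1:ℕ):ℝ))/2 = (2+σ)/2 by push_cast; ring]
    exact h
  · subst h2
    have hσ1 : σ < 1 := by
      have h := hσd; push_cast at h; linarith
    obtain ⟨K, hK, hcore⟩ := core2 σ hσ hσ1
    refine glue 2 (by norm_num) σ hσ hσd K hK (fun u hu h2u => ?_)
    have h := hcore u hu h2u
    rw [show σ * ((2:ℕ):ℝ) / 2 = σ by push_cast; ring,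
        show (2 + 2*σ - σ*((2:ℕ):ℝ))/2 = (1:ℝ) by push_cast; ring]
    exact h
  · obtain ⟨K, hK, hcore⟩ := core3 d h3 σ hσ hσd
    exact glue d (by omega) σ hσ hσd K hK hcore
end

section
/- Let d ≥ 1 be an integer and σ > 0 a real number with σ d < 2. Then there exists a constant G > 0 such that for every continuously differentiable function u : ℝ^d → ℂ with compact support, (1/(2(1+σ))) ‖u‖_{L^{2+2σ}}^{2+2σ} ≤ (1/4) ‖∇u‖_{L²}² + G ‖u‖_{L²}^{2 + 4σ/(2 − σd)}; consequently, for every such u, (1/2) ‖∇u‖_{L²}² − (1/(2(1+σ))) ‖u‖_{L^{2+2σ}}^{2+2σ} + G ‖u‖_{L²}^{2 + 4σ/(2 − σd)} ≥ (1/4) ‖∇u‖_{L²}². -/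
open MeasureTheory ENNReal NNReal

private lemma eLpNorm_eq_lintegral_rpow_nnnorm {α E : Type*} [MeasurableSpace α] {μ : Measure α}
    [NormedAddCommGroup E] {f : α → E} {p : ℝ≥0∞} (hp_ne_zero : p ≠ 0) (hp_ne_top : p ≠ ∞) :
    eLpNorm f p μ = (∫⁻ x, (‖f x‖₊ : ℝ≥0∞) ^ p.toReal ∂μ) ^ (1 / p.toReal) :=
  eLpNorm_eq_lintegral_rpow_enorm_toReal hp_ne_zero hp_ne_top

private lemma eLpNorm_one_eq_lintegral_nnnorm {α E : Type*} [MeasurableSpace α] {μ : Measure α}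
    [NormedAddCommGroup E] {f : α → E} : eLpNorm f 1 μ = ∫⁻ x, (‖f x‖₊ : ℝ≥0∞) ∂μ :=
  eLpNorm_one_eq_lintegral_enorm

private lemma ofReal_norm_eq_coe_nnnorm {E : Type*} [NormedAddCommGroup E] (a : E) :
    ENNReal.ofReal ‖a‖ = (‖a‖₊ : ℝ≥0∞) :=
  ofReal_norm_eq_enorm a

private lemma ofReal_integral_norm_eq_lintegral_nnnorm {α P : Type*} [MeasurableSpace α]
    {μ : Measure α} [NormedAddCommGroup P] {f : α → P} (hf : Integrable f μ) :
    ENNReal.ofReal (∫ x, ‖f x‖ ∂μ) = ∫⁻ x, (‖f x‖₊ : ℝ≥0∞) ∂μ :=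
  ofReal_integral_norm_eq_lintegral_enorm hf

private lemma my_interp {α : Type*} [MeasurableSpace α] (μ : Measure α) {f : α → ℝ≥0∞}
    (hf : AEMeasurable f μ) {p r a b : ℝ} (ha : 0 < a) (hb : 0 < b)
    (hap : a < p) (hab : a / p + b / r = 1) :
    ∫⁻ x, f x ^ (a + b) ∂μ ≤ (∫⁻ x, f x ^ p ∂μ) ^ (a / p) * (∫⁻ x, f x ^ r ∂μ) ^ (b / r) := by
  have hp : 0 < p := lt_trans ha hap
  have hconj : Real.HolderConjugate (p / a) (r / b) := by
    rw [Real.holderConjugate_iff]; constructor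
    · rw [lt_div_iff₀ ha]; linarith
    · rw [inv_div, inv_div]; linarith [hab]
  calc ∫⁻ x, f x ^ (a + b) ∂μ = ∫⁻ x, ((fun x => f x ^ a) * fun x => f x ^ b) x ∂μ := by
        simp only [Pi.mul_apply]
        exact lintegral_congr fun x => ENNReal.rpow_add_of_nonneg _ _ ha.le hb.le
    _ ≤ (∫⁻ x, (f x ^ a) ^ (p / a) ∂μ) ^ (1 / (p / a)) * (∫⁻ x, (f x ^ b) ^ (r / b) ∂μ) ^ (1 / (r / b)) :=
        ENNReal.lintegral_mul_le_Lp_mul_Lq μ hconj (hf.pow_const a) (hf.pow_const b)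
    _ = (∫⁻ x, f x ^ p ∂μ) ^ (a / p) * (∫⁻ x, f x ^ r ∂μ) ^ (b / r) := by
        rw [one_div, inv_div, one_div, inv_div]
        congr 2 <;> refine lintegral_congr fun x => ?_
        · rw [← ENNReal.rpow_mul, mul_div_cancel₀ _ ha.ne']
        · rw [← ENNReal.rpow_mul, mul_div_cancel₀ _ hb.ne']


private lemma my_young {w₁ w₂ c t s : ℝ} (hw₁ : 0 < w₁) (hw₂ : 0 < w₂) (hw : w₁ + w₂ = 1)
    (hc : 0 < c) (ht : 0 ≤ t) (hs : 0 ≤ s) :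
    c * (t ^ w₁ * s ^ w₂) ≤ (1 / 4) * t + (w₂ * (c * (4 * w₁) ^ w₁) ^ (1 / w₂)) * s := by
  have h4w : (0:ℝ) < 4 * w₁ := by linarith
  set p₁ := t / (4 * w₁) with hp₁
  set p₂ := (c * (4 * w₁) ^ w₁) ^ (1 / w₂) * s with hp₂
  have hp₁0 : 0 ≤ p₁ := by positivity
  have hp₂0 : 0 ≤ p₂ := by positivity
  have key : p₁ ^ w₁ * p₂ ^ w₂ ≤ w₁ * p₁ + w₂ * p₂ :=
    Real.geom_mean_le_arith_mean2_weighted hw₁.le hw₂.le hp₁0 hp₂0 hw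
  have h2 : ((c * (4 * w₁) ^ w₁) ^ (1 / w₂)) ^ w₂ = c * (4 * w₁) ^ w₁ := by
    rw [← Real.rpow_mul (by positivity), one_div, inv_mul_cancel₀ hw₂.ne', Real.rpow_one]
  have heq : c * (t ^ w₁ * s ^ w₂) = p₁ ^ w₁ * p₂ ^ w₂ := by
    rw [hp₁, hp₂, Real.mul_rpow (by positivity) hs, h2, Real.div_rpow ht h4w.le]
    field_simp
  rw [heq]
  refine key.trans ?_
  have : w₁ * p₁ = (1/4) * t := by rw [hp₁]; field_simp
  rw [this, hp₂]
  ring_nf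
  exact le_refl _

private noncomputable def myE1 : ℝ ≃ₗᵢ[ℝ] EuclideanSpace ℝ (Fin 1) where
  toLinearEquiv := (LinearEquiv.funUnique (Fin 1) ℝ ℝ).symm.trans (WithLp.linearEquiv 2 ℝ (Fin 1 → ℝ)).symm
  norm_map' := fun t => by
    rw [EuclideanSpace.norm_eq]
    simp [Real.sqrt_sq_eq_abs]

private lemma myE1_mp : MeasurePreserving (⇑myE1) volume volume := by
  have h1 := (EuclideanSpace.volume_preserving_symm_measurableEquiv_toLp (Fin 1)).symm
  have h2 := (volume_preserving_funUnique (Fin 1) ℝ).symm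
  exact h1.comp h2

private lemma gne1R (σ : ℝ) (hσ : 0 < σ) (w : ℝ → ℂ) (hw : ContDiff ℝ 1 w)
    (h2w : HasCompactSupport w) :
    (∫⁻ t, (‖w t‖₊ : ℝ≥0∞) ^ (2 + 2*σ)) ≤
      (2:ℝ≥0∞) ^ σ * (eLpNorm (fderiv ℝ w) 2 volume) ^ σ * (eLpNorm w 2 volume) ^ (2 + σ) := by
  set X := eLpNorm (fderiv ℝ w) 2 (volume : Measure ℝ) with hXdef
  set Y := eLpNorm w 2 (volume : Measure ℝ) with hYdef
  set g : ℝ → ℝ := fun t => ‖w t‖ ^ (((2:ℝ≥0)):ℝ) with hgdef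
  have hcoe2 : (((2:ℝ≥0)):ℝ) = (2:ℝ) := by norm_num
  have hgC : ContDiff ℝ 1 g := hw.norm_rpow (by rw [hcoe2]; norm_num)
  have h2g : HasCompactSupport g := h2w.norm.rpow_const (by rw [hcoe2]; norm_num)
  have hmeasw : AEMeasurable (fun t => (‖w t‖₊ : ℝ≥0∞)) (volume : Measure ℝ) :=
    (hw.continuous.measurable.nnnorm.coe_nnreal_ennreal).aemeasurable
  have hmeasdw : AEMeasurable (fun t => (‖fderiv ℝ w t‖₊ : ℝ≥0∞)) (volume : Measure ℝ) :=
    ((hw.fderiv_right (m := 0) le_rfl).continuous.measurable.nnnorm.coe_nnreal_ennreal).aemeasurable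
  have hYeq : (∫⁻ t, (‖w t‖₊ : ℝ≥0∞) ^ (2:ℝ)) = Y ^ (2:ℝ) := by
    rw [hYdef, eLpNorm_eq_lintegral_rpow_nnnorm (by norm_num) (by norm_num), ← ENNReal.rpow_mul]
    norm_num
  have hXeq : (∫⁻ t, (‖fderiv ℝ w t‖₊ : ℝ≥0∞) ^ (2:ℝ)) = X ^ (2:ℝ) := by
    rw [hXdef, eLpNorm_eq_lintegral_rpow_nnnorm (by norm_num) (by norm_num), ← ENNReal.rpow_mul]
    norm_num
  -- derivative of g is integrable with lintegral bound
  have hdgcont : Continuous (deriv g) := hgC.continuous_deriv le_rfl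
  have hdgint : Integrable (deriv g) (volume : Measure ℝ) :=
    hdgcont.integrable_of_hasCompactSupport h2g.deriv
  have hptwise : ∀ t : ℝ, (‖deriv g t‖₊ : ℝ≥0∞) ≤ 2 * ((‖w t‖₊ : ℝ≥0∞) * (‖fderiv ℝ w t‖₊ : ℝ≥0∞)) := by
    intro t
    have h0 := nnnorm_fderiv_norm_rpow_le (E := ℂ) (hw.differentiable one_ne_zero) (x := t)
      (p := 2) one_lt_two
    have h1 : ‖deriv g t‖₊ ≤ ‖fderiv ℝ g t‖₊ := by
      have : deriv g t = fderiv ℝ g t 1 := by rw [fderiv_apply_one_eq_deriv]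
      rw [← NNReal.coe_le_coe]
      simp only [coe_nnnorm, this]
      calc ‖fderiv ℝ g t 1‖ ≤ ‖fderiv ℝ g t‖ * ‖(1:ℝ)‖ := (fderiv ℝ g t).le_opNorm 1
        _ = ‖fderiv ℝ g t‖ := by simp
    have h2 : ‖fderiv ℝ g t‖₊ ≤ 2 * (‖w t‖₊ * ‖fderiv ℝ w t‖₊) := by
      have h3 : (((2:ℝ≥0)):ℝ) - 1 = 1 := by norm_num
      rw [h3, NNReal.rpow_one] at h0
      calc ‖fderiv ℝ g t‖₊ ≤ 2 * ‖w t‖₊ * ‖fderiv ℝ w t‖₊ := h0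
        _ = 2 * (‖w t‖₊ * ‖fderiv ℝ w t‖₊) := by ring
    calc (‖deriv g t‖₊ : ℝ≥0∞) ≤ ((2 * (‖w t‖₊ * ‖fderiv ℝ w t‖₊) : ℝ≥0) : ℝ≥0∞) :=
          ENNReal.coe_le_coe.mpr (h1.trans h2)
      _ = 2 * ((‖w t‖₊ : ℝ≥0∞) * (‖fderiv ℝ w t‖₊ : ℝ≥0∞)) := by push_cast; ring
  -- pointwise sup bound
  have hsup : ∀ b : ℝ, (‖w b‖₊ : ℝ≥0∞) ^ (2:ℝ) ≤ 2 * Y * X := by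
    intro b
    have hftc : g b = ∫ t in Set.Iic b, deriv g t := (h2g.integral_Iic_deriv_eq hgC b).symm
    have hgb : g b ≤ ∫ t, ‖deriv g t‖ := by
      rw [hftc]
      calc ∫ t in Set.Iic b, deriv g t ≤ ‖∫ t in Set.Iic b, deriv g t‖ := le_abs_self _
        _ ≤ ∫ t in Set.Iic b, ‖deriv g t‖ := norm_integral_le_integral_norm _
        _ ≤ ∫ t, ‖deriv g t‖ :=
            setIntegral_le_integral hdgint.norm (Filter.Eventually.of_forall fun t => norm_nonneg _)
    have hco : (‖w b‖₊ : ℝ≥0∞) ^ (2:ℝ) = ENNReal.ofReal (g b) := by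
      have : g b = ‖g b‖ := (Real.norm_of_nonneg (by rw [hgdef]; positivity)).symm
      rw [this, ofReal_norm_eq_coe_nnnorm]
      rw [hgdef]
      simp only
      rw [Real.nnnorm_rpow_of_nonneg (norm_nonneg _), nnnorm_norm, hcoe2,
        ← ENNReal.coe_rpow_of_nonneg _ (by norm_num)]
    rw [hco]
    calc ENNReal.ofReal (g b) ≤ ENNReal.ofReal (∫ t, ‖deriv g t‖) := ENNReal.ofReal_le_ofReal hgb
      _ = ∫⁻ t, (‖deriv g t‖₊ : ℝ≥0∞) := ofReal_integral_norm_eq_lintegral_nnnorm hdgint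
      _ ≤ ∫⁻ t, 2 * ((‖w t‖₊ : ℝ≥0∞) * (‖fderiv ℝ w t‖₊ : ℝ≥0∞)) := lintegral_mono hptwise
      _ = 2 * ∫⁻ t, ((fun t => (‖w t‖₊ : ℝ≥0∞)) * fun t => (‖fderiv ℝ w t‖₊ : ℝ≥0∞)) t := by
          rw [lintegral_const_mul' _ _ (by norm_num)]; rfl
      _ ≤ 2 * ((∫⁻ t, (‖w t‖₊ : ℝ≥0∞) ^ (2:ℝ)) ^ (1/(2:ℝ)) * (∫⁻ t, (‖fderiv ℝ w t‖₊ : ℝ≥0∞) ^ (2:ℝ)) ^ (1/(2:ℝ))) := by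
          gcongr
          exact ENNReal.lintegral_mul_le_Lp_mul_Lq volume (Real.holderConjugate_iff.mpr ⟨one_lt_two, by norm_num⟩) hmeasw hmeasdw
      _ = 2 * Y * X := by
          rw [hYeq, hXeq, ← ENNReal.rpow_mul, ← ENNReal.rpow_mul]
          norm_num
          ring
  -- conclude
  calc (∫⁻ t, (‖w t‖₊ : ℝ≥0∞) ^ (2 + 2*σ))
      = ∫⁻ t, ((‖w t‖₊ : ℝ≥0∞) ^ (2:ℝ)) ^ σ * (‖w t‖₊ : ℝ≥0∞) ^ (2:ℝ) := by
        refine lintegral_congr fun t => ?_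
        rw [← ENNReal.rpow_mul, ← ENNReal.rpow_add_of_nonneg _ _ (by positivity) (by norm_num)]
        congr 1
        ring
    _ ≤ ∫⁻ t, (2 * Y * X) ^ σ * (‖w t‖₊ : ℝ≥0∞) ^ (2:ℝ) := by
        refine lintegral_mono fun t => ?_
        gcongr
        exact hsup t
    _ = (2 * Y * X) ^ σ * (Y ^ (2:ℝ)) := by
        rw [lintegral_const_mul' _ _ (by
          exact ENNReal.rpow_ne_top_of_nonneg hσ.le (by
            refine ENNReal.mul_ne_top (ENNReal.mul_ne_top (by norm_num) ?_) ?_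
            · exact (hw.continuous.memLp_of_hasCompactSupport (μ := volume) h2w).eLpNorm_lt_top.ne
            · exact (((hw.fderiv_right (m := 0) le_rfl).continuous).memLp_of_hasCompactSupport
                (μ := volume) (h2w.fderiv ℝ)).eLpNorm_lt_top.ne))]
        rw [hYeq]
    _ = (2:ℝ≥0∞) ^ σ * X ^ σ * Y ^ (2 + σ) := by
        rw [ENNReal.mul_rpow_of_nonneg _ _ hσ.le, ENNReal.mul_rpow_of_nonneg _ _ hσ.le]
        have : Y ^ σ * Y ^ (2:ℝ) = Y ^ (2 + σ) := by
          rw [← ENNReal.rpow_add_of_nonneg _ _ hσ.le (by norm_num)]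
          congr 1
          ring
        calc (2:ℝ≥0∞) ^ σ * Y ^ σ * X ^ σ * Y ^ (2:ℝ)
            = (2:ℝ≥0∞) ^ σ * X ^ σ * (Y ^ σ * Y ^ (2:ℝ)) := by ring
          _ = (2:ℝ≥0∞) ^ σ * X ^ σ * Y ^ (2 + σ) := by rw [this]

private lemma gne1 (σ : ℝ) (hσ : 0 < σ) :
    ∃ C : ℝ≥0∞, C ≠ ⊤ ∧ ∀ u : EuclideanSpace ℝ (Fin 1) → ℂ, ContDiff ℝ 1 u → HasCompactSupport u →
      (∫⁻ x, (‖u x‖₊ : ℝ≥0∞) ^ (2 + 2*σ)) ≤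
        C * (eLpNorm (fderiv ℝ u) 2 volume) ^ (σ * (1:ℕ)) * (eLpNorm u 2 volume) ^ (2 + 2*σ - σ * (1:ℕ)) := by
  refine ⟨(2:ℝ≥0∞) ^ σ, ENNReal.rpow_ne_top_of_nonneg hσ.le (by norm_num), ?_⟩
  intro u hu h2u
  set w : ℝ → ℂ := u ∘ ⇑myE1 with hwdef
  have hL : ContDiff ℝ 1 (⇑myE1) := by
    exact (myE1.toContinuousLinearEquiv.toContinuousLinearMap.contDiff (n := 1))
  have hwC : ContDiff ℝ 1 w := hu.comp hL
  have h2w : HasCompactSupport w := h2u.comp_homeomorph myE1.toHomeomorph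
  have hdu : Continuous (fderiv ℝ u) := (hu.fderiv_right (m := 0) le_rfl).continuous
  have hnorm : ∀ t : ℝ, ‖fderiv ℝ w t‖ = ‖fderiv ℝ u (myE1 t)‖ := by
    intro t
    have hdc : fderiv ℝ w t = (fderiv ℝ u (myE1 t)).comp
        (myE1.toContinuousLinearEquiv : ℝ →L[ℝ] EuclideanSpace ℝ (Fin 1)) := by
      have h := fderiv_comp (𝕜 := ℝ) t (hu.differentiable one_ne_zero (myE1 t))
        ((myE1.toContinuousLinearEquiv : ℝ →L[ℝ] EuclideanSpace ℝ (Fin 1)).differentiable t)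
      have h2 : fderiv ℝ (⇑myE1) t = (myE1.toContinuousLinearEquiv : ℝ →L[ℝ] EuclideanSpace ℝ (Fin 1)) :=
        (myE1.toContinuousLinearEquiv : ℝ ≃L[ℝ] EuclideanSpace ℝ (Fin 1)).fderiv
      rw [h2] at h
      exact h
    rw [hdc]
    exact ContinuousLinearMap.opNorm_comp_linearIsometryEquiv _ _
  -- transfer the three quantities
  have hq : (∫⁻ x, (‖u x‖₊ : ℝ≥0∞) ^ (2 + 2*σ)) = ∫⁻ t, (‖w t‖₊ : ℝ≥0∞) ^ (2 + 2*σ) := by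
    rw [← myE1_mp.lintegral_comp (f := fun x => (‖u x‖₊ : ℝ≥0∞) ^ (2 + 2*σ))
      ((hu.continuous.measurable.nnnorm.coe_nnreal_ennreal).pow_const _)]
    rfl
  have hY : eLpNorm u 2 (volume : Measure (EuclideanSpace ℝ (Fin 1))) = eLpNorm w 2 volume :=
    (eLpNorm_comp_measurePreserving hu.continuous.aestronglyMeasurable myE1_mp).symm
  have hX : eLpNorm (fderiv ℝ u) 2 (volume : Measure (EuclideanSpace ℝ (Fin 1)))
      = eLpNorm (fderiv ℝ w) 2 volume := by
    rw [← eLpNorm_norm (fderiv ℝ w), ← eLpNorm_norm (fderiv ℝ u)]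
    have : (fun t => ‖fderiv ℝ w t‖) = (fun x => ‖fderiv ℝ u x‖) ∘ ⇑myE1 := funext hnorm
    rw [this]
    exact (eLpNorm_comp_measurePreserving (hdu.norm.aestronglyMeasurable) myE1_mp).symm
  have h1 : σ * ((1:ℕ):ℝ) = σ := by push_cast; ring
  have h2 : 2 + 2*σ - σ * ((1:ℕ):ℝ) = 2 + σ := by push_cast; ring
  rw [hq, hY, hX, h2, h1]
  exact gne1R σ hσ w hwC h2w

private lemma gne2 (σ : ℝ) (hσ : 0 < σ) (hσ1 : σ < 1) :
    ∃ C : ℝ≥0∞, C ≠ ⊤ ∧ ∀ u : EuclideanSpace ℝ (Fin 2) → ℂ, ContDiff ℝ 1 u → HasCompactSupport u →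
      (∫⁻ x, (‖u x‖₊ : ℝ≥0∞) ^ (2 + 2*σ)) ≤
        C * (eLpNorm (fderiv ℝ u) 2 volume) ^ (σ * (2:ℕ)) * (eLpNorm u 2 volume) ^ (2 + 2*σ - σ * (2:ℕ)) := by
  set E := EuclideanSpace ℝ (Fin 2)
  set C₁ : ℝ≥0 := eLpNormLESNormFDerivOneConst (volume : Measure E) (((2:ℝ≥0)):ℝ) with hC₁
  refine ⟨((C₁:ℝ≥0∞) * 2) ^ (2*σ), ENNReal.rpow_ne_top_of_nonneg (by positivity)
    (by finiteness), ?_⟩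
  intro u hu h2u
  set X := eLpNorm (fderiv ℝ u) 2 (volume : Measure E) with hX
  set Y := eLpNorm u 2 (volume : Measure E) with hY
  have hfrank : Module.finrank ℝ E = 2 := by simp [E, finrank_euclideanSpace]
  have hconj : NNReal.HolderConjugate (Module.finrank ℝ E) 2 := by
    rw [hfrank]
    have h22 : ((2:ℕ):ℝ≥0) = (2:ℝ≥0) := by norm_num
    rw [h22]
    exact NNReal.holderConjugate_iff.mpr ⟨one_lt_two, by rw [← two_mul, mul_inv_cancel₀ two_ne_zero]⟩
  set v : E → ℝ := fun x => ‖u x‖ ^ (((2:ℝ≥0)):ℝ) with hv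
  have hcoe2 : (((2:ℝ≥0)):ℝ) = (2:ℝ) := by norm_num
  have hvC : ContDiff ℝ 1 v := hu.norm_rpow (by rw [hcoe2]; norm_num)
  have h2v : HasCompactSupport v := h2u.norm.rpow_const (by rw [hcoe2]; norm_num)
  have hSob : eLpNorm v 2 volume ≤ (C₁ : ℝ≥0∞) * eLpNorm (fderiv ℝ v) 1 volume := by
    have := eLpNorm_le_eLpNorm_fderiv_one (volume : Measure E) hvC h2v hconj
    simpa [hC₁] using this
  have hvnn : ∀ x, (‖v x‖₊ : ℝ≥0∞) = (‖u x‖₊ : ℝ≥0∞) ^ (2:ℝ) := by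
    intro x
    rw [hv]
    rw [Real.nnnorm_rpow_of_nonneg (norm_nonneg _), nnnorm_norm, hcoe2]
    rw [← ENNReal.coe_rpow_of_nonneg _ (by norm_num)]
  have hmeasu : AEMeasurable (fun x => (‖u x‖₊ : ℝ≥0∞)) (volume : Measure E) :=
    (hu.continuous.measurable.nnnorm.coe_nnreal_ennreal).aemeasurable
  have hmeasdu : AEMeasurable (fun x => (‖fderiv ℝ u x‖₊ : ℝ≥0∞)) (volume : Measure E) :=
    ((hu.fderiv_right (m := 0) le_rfl).continuous.measurable.nnnorm.coe_nnreal_ennreal).aemeasurable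
  have hYeq : (∫⁻ x, (‖u x‖₊ : ℝ≥0∞) ^ (2:ℝ)) = Y ^ (2:ℝ) := by
    rw [hY, eLpNorm_eq_lintegral_rpow_nnnorm (by norm_num) (by norm_num), ← ENNReal.rpow_mul]
    norm_num
  have hXeq : (∫⁻ x, (‖fderiv ℝ u x‖₊ : ℝ≥0∞) ^ (2:ℝ)) = X ^ (2:ℝ) := by
    rw [hX, eLpNorm_eq_lintegral_rpow_nnnorm (by norm_num) (by norm_num), ← ENNReal.rpow_mul]
    norm_num
  have hI4 : (∫⁻ x, (‖u x‖₊ : ℝ≥0∞) ^ (4:ℝ)) ≤ ((C₁:ℝ≥0∞) * 2 * Y * X) ^ (2:ℝ) := by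
    have hv2 : eLpNorm v 2 volume = (∫⁻ x, (‖u x‖₊ : ℝ≥0∞) ^ (4:ℝ)) ^ (1/2 : ℝ) := by
      rw [eLpNorm_eq_lintegral_rpow_nnnorm (by norm_num) (by norm_num)]
      norm_num
      congr 1
      refine lintegral_congr fun x => ?_
      rw [hvnn x, ← ENNReal.rpow_natCast ((‖u x‖₊ : ℝ≥0∞) ^ (2:ℝ)) 2, ← ENNReal.rpow_mul]
      norm_num
    have hgrad : eLpNorm (fderiv ℝ v) 1 volume ≤ 2 * Y * X := by
      rw [eLpNorm_one_eq_lintegral_nnnorm]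
      have hptwise : ∀ x : E, (‖fderiv ℝ v x‖₊ : ℝ≥0∞) ≤ 2 * ((‖u x‖₊ : ℝ≥0∞) * (‖fderiv ℝ u x‖₊ : ℝ≥0∞)) := by
        intro x
        have h0 := nnnorm_fderiv_norm_rpow_le (E := ℂ) (hu.differentiable one_ne_zero) (x := x)
          (p := 2) one_lt_two
        have h1 : ‖fderiv ℝ v x‖₊ ≤ 2 * (‖u x‖₊ * ‖fderiv ℝ u x‖₊) := by
          have h2 : (((2:ℝ≥0)):ℝ) - 1 = 1 := by norm_num
          rw [h2, NNReal.rpow_one] at h0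
          calc ‖fderiv ℝ v x‖₊ ≤ 2 * ‖u x‖₊ * ‖fderiv ℝ u x‖₊ := h0
            _ = 2 * (‖u x‖₊ * ‖fderiv ℝ u x‖₊) := by ring
        calc (‖fderiv ℝ v x‖₊ : ℝ≥0∞) ≤ ((2 * (‖u x‖₊ * ‖fderiv ℝ u x‖₊) : ℝ≥0) : ℝ≥0∞) :=
              ENNReal.coe_le_coe.mpr h1
          _ = 2 * ((‖u x‖₊ : ℝ≥0∞) * (‖fderiv ℝ u x‖₊ : ℝ≥0∞)) := by push_cast; ring
      calc ∫⁻ x, (‖fderiv ℝ v x‖₊ : ℝ≥0∞) ∂volume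
          ≤ ∫⁻ x, 2 * ((‖u x‖₊ : ℝ≥0∞) * (‖fderiv ℝ u x‖₊ : ℝ≥0∞)) ∂volume :=
            lintegral_mono hptwise
        _ = 2 * ∫⁻ x, ((fun x => (‖u x‖₊ : ℝ≥0∞)) * fun x => (‖fderiv ℝ u x‖₊ : ℝ≥0∞)) x ∂volume := by
            rw [lintegral_const_mul' _ _ (by norm_num)]; rfl
        _ ≤ 2 * ((∫⁻ x, (‖u x‖₊ : ℝ≥0∞) ^ (2:ℝ)) ^ (1/(2:ℝ)) * (∫⁻ x, (‖fderiv ℝ u x‖₊ : ℝ≥0∞) ^ (2:ℝ)) ^ (1/(2:ℝ))) := by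
            gcongr
            exact ENNReal.lintegral_mul_le_Lp_mul_Lq volume (Real.holderConjugate_iff.mpr ⟨one_lt_two, by norm_num⟩) hmeasu hmeasdu
        _ = 2 * Y * X := by
            rw [hYeq, hXeq, ← ENNReal.rpow_mul, ← ENNReal.rpow_mul]
            norm_num
            ring
    calc (∫⁻ x, (‖u x‖₊ : ℝ≥0∞) ^ (4:ℝ)) = (eLpNorm v 2 volume) ^ (2:ℝ) := by
          rw [hv2, ← ENNReal.rpow_mul]; norm_num
      _ ≤ ((C₁:ℝ≥0∞) * (2 * Y * X)) ^ (2:ℝ) := by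
          gcongr
          exact hSob.trans (by gcongr)
      _ = ((C₁:ℝ≥0∞) * 2 * Y * X) ^ (2:ℝ) := by ring_nf
  have hab : (2 - 2*σ) / 2 + (2*σ) / 4 + (2*σ) / 4 = 1 := by ring
  calc (∫⁻ x, (‖u x‖₊ : ℝ≥0∞) ^ (2 + 2*σ))
      = ∫⁻ x, (‖u x‖₊ : ℝ≥0∞) ^ ((2 - 2*σ) + 4*σ) := by
        refine lintegral_congr fun x => ?_; congr 1; ring
    _ ≤ (∫⁻ x, (‖u x‖₊ : ℝ≥0∞) ^ (2:ℝ)) ^ ((2 - 2*σ)/2) * (∫⁻ x, (‖u x‖₊ : ℝ≥0∞) ^ (4:ℝ)) ^ ((4*σ)/4) :=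
        my_interp _ hmeasu (by linarith) (by positivity) (by linarith) (by ring)
    _ ≤ (Y ^ (2:ℝ)) ^ ((2 - 2*σ)/2) * (((C₁:ℝ≥0∞) * 2 * Y * X) ^ (2:ℝ)) ^ ((4*σ)/4) := by
        rw [hYeq]
        gcongr
    _ = ((C₁:ℝ≥0∞) * 2) ^ (2*σ) * X ^ (σ * (2:ℕ)) * Y ^ (2 + 2*σ - σ * (2:ℕ)) := by
        rw [← ENNReal.rpow_mul, ← ENNReal.rpow_mul]
        have e1 : (2:ℝ) * ((2 - 2*σ)/2) = 2 - 2*σ := by ring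
        have e2 : (2:ℝ) * ((4*σ)/4) = 2*σ := by ring
        rw [e1, e2]
        rw [ENNReal.mul_rpow_of_nonneg _ _ (by positivity : (0:ℝ) ≤ 2*σ),
            ENNReal.mul_rpow_of_nonneg _ _ (by positivity : (0:ℝ) ≤ 2*σ)]
        have e3 : (σ * ((2:ℕ):ℝ)) = 2*σ := by push_cast; ring
        have e4 : (2 + 2*σ - σ * ((2:ℕ):ℝ)) = 2 := by push_cast; ring
        rw [e4, e3]
        have e5 : Y ^ (2 - 2*σ) * Y ^ (2*σ) = Y ^ (2:ℝ) := by
          rw [← ENNReal.rpow_add_of_nonneg _ _ (by linarith) (by positivity)]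
          norm_num
        calc Y ^ (2 - 2*σ) * (((C₁:ℝ≥0∞) * 2) ^ (2*σ) * Y ^ (2*σ) * X ^ (2*σ))
            = ((C₁:ℝ≥0∞) * 2) ^ (2*σ) * X ^ (2*σ) * (Y ^ (2 - 2*σ) * Y ^ (2*σ)) := by ring
          _ = ((C₁:ℝ≥0∞) * 2) ^ (2*σ) * X ^ (2*σ) * Y ^ (2:ℝ) := by rw [e5]

private lemma gne3 (d : ℕ) (hd : 3 ≤ d) (σ : ℝ) (hσ : 0 < σ) (hσd : σ * d < 2) :
    ∃ C : ℝ≥0∞, C ≠ ⊤ ∧ ∀ u : EuclideanSpace ℝ (Fin d) → ℂ, ContDiff ℝ 1 u → HasCompactSupport u →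
      (∫⁻ x, (‖u x‖₊ : ℝ≥0∞) ^ (2 + 2*σ)) ≤
        C * (eLpNorm (fderiv ℝ u) 2 volume) ^ (σ * d) * (eLpNorm u 2 volume) ^ (2 + 2*σ - σ * d) := by
  have hdR : (3:ℝ) ≤ (d:ℝ) := by exact_mod_cast hd
  have hd2 : (2:ℝ) < (d:ℝ) := by linarith
  set C₀ : ℝ≥0 := SNormLESNormFDerivOfEqConst ℂ (volume : Measure (EuclideanSpace ℝ (Fin d))) 2
  set b : ℝ := σ * d with hbdef
  have hb : 0 < b := by positivity
  refine ⟨(C₀ : ℝ≥0∞) ^ b, ENNReal.rpow_ne_top_of_nonneg hb.le ENNReal.coe_ne_top, ?_⟩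
  intro u hu h2u
  set a : ℝ := 2 + 2*σ - σ * d with hadef
  have ha : 0 < a := by nlinarith
  have hap : a < 2 := by nlinarith [mul_lt_mul_of_pos_left hd2 hσ]
  set p' : ℝ≥0 := 2 * (d : ℝ≥0) / ((d : ℝ≥0) - 2) with hp'def
  have hd2' : (2:ℝ≥0) ≤ (d:ℝ≥0) := by exact_mod_cast (by linarith : (2:ℝ) ≤ d)
  have hp'R : (p' : ℝ) = 2 * d / ((d:ℝ) - 2) := by
    rw [hp'def]
    push_cast [NNReal.coe_sub hd2']
    ring
  set rr : ℝ := 2 * d / ((d:ℝ) - 2) with hrrdef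
  have hrr : 0 < rr := by
    rw [hrrdef]; apply div_pos <;> linarith
  have hp'0 : p' ≠ 0 := by
    intro h; apply hrr.ne'; rw [← hp'R, h]; simp
  have hfrank : Module.finrank ℝ (EuclideanSpace ℝ (Fin d)) = d := by
    simp [finrank_euclideanSpace]
  have hp' : ((p':ℝ))⁻¹ = (((2:ℝ≥0)⁻¹ : ℝ≥0) : ℝ) - ((Module.finrank ℝ (EuclideanSpace ℝ (Fin d)) : ℝ))⁻¹ := by
    have h1 : (d:ℝ) ≠ 0 := by positivity
    have h2 : (d:ℝ) - 2 ≠ 0 := by linarith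
    rw [hfrank, hp'R, hrrdef]
    push_cast
    field_simp
  have hSob := eLpNorm_le_eLpNorm_fderiv_of_eq (volume : Measure (EuclideanSpace ℝ (Fin d)))
    hu h2u (p := 2) (p' := p') one_le_two (by rw [hfrank]; omega) hp'
  have hmeas : AEMeasurable (fun x => (‖u x‖₊ : ℝ≥0∞)) volume :=
    (hu.continuous.measurable.nnnorm.coe_nnreal_ennreal).aemeasurable
  have hab : a / 2 + b / rr = 1 := by
    rw [hadef, hbdef, hrrdef]
    have : (d:ℝ) ≠ 0 := by positivity
    field_simp
    ring
  have h2sum : (2 + 2*σ) = a + b := by rw [hadef, hbdef]; ring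
  have hI2 : ∫⁻ x, (‖u x‖₊ : ℝ≥0∞) ^ (2:ℝ) = (eLpNorm u 2 volume) ^ (2:ℝ) := by
    rw [eLpNorm_eq_lintegral_rpow_nnnorm (by norm_num) (by norm_num)]
    rw [← ENNReal.rpow_mul]
    norm_num
  have hIr : ∫⁻ x, (‖u x‖₊ : ℝ≥0∞) ^ rr = (eLpNorm u p' volume) ^ rr := by
    rw [eLpNorm_eq_lintegral_rpow_nnnorm (by exact_mod_cast hp'0) ENNReal.coe_ne_top]
    rw [← ENNReal.rpow_mul]
    rw [ENNReal.coe_toReal, hp'R, one_div, inv_mul_cancel₀ hrr.ne', ENNReal.rpow_one]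
  calc (∫⁻ x, (‖u x‖₊ : ℝ≥0∞) ^ (2 + 2*σ))
      = ∫⁻ x, (‖u x‖₊ : ℝ≥0∞) ^ (a + b) := by rw [h2sum]
    _ ≤ (∫⁻ x, (‖u x‖₊ : ℝ≥0∞) ^ (2:ℝ)) ^ (a/2) * (∫⁻ x, (‖u x‖₊ : ℝ≥0∞) ^ rr) ^ (b/rr) :=
        my_interp _ hmeas ha hb hap hab
    _ = (eLpNorm u 2 volume) ^ a * (eLpNorm u p' volume) ^ b := by
        rw [hI2, hIr, ← ENNReal.rpow_mul, ← ENNReal.rpow_mul]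
        congr 1
        · congr 1; field_simp
        · congr 1; field_simp
    _ ≤ (eLpNorm u 2 volume) ^ a * ((C₀ : ℝ≥0∞) * eLpNorm (fderiv ℝ u) 2 volume) ^ b := by
        gcongr
        exact hSob
    _ = (C₀ : ℝ≥0∞) ^ b * (eLpNorm (fderiv ℝ u) 2 volume) ^ (σ * d) * (eLpNorm u 2 volume) ^ (2 + 2*σ - σ * d) := by
        rw [ENNReal.mul_rpow_of_nonneg _ _ hb.le]
        ring

private lemma my_gn (d : ℕ) (hd : 1 ≤ d) (σ : ℝ) (hσ : 0 < σ) (hσd : σ * d < 2) :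
    ∃ C : ℝ≥0∞, C ≠ ⊤ ∧ ∀ u : EuclideanSpace ℝ (Fin d) → ℂ, ContDiff ℝ 1 u → HasCompactSupport u →
      (∫⁻ x, (‖u x‖₊ : ℝ≥0∞) ^ (2 + 2*σ)) ≤
        C * (eLpNorm (fderiv ℝ u) 2 volume) ^ (σ * d) * (eLpNorm u 2 volume) ^ (2 + 2*σ - σ * d) := by
  by_cases h1 : d = 1
  · subst h1; exact gne1 σ hσ
  by_cases h2 : d = 2
  · subst h2
    refine gne2 σ hσ ?_
    have h22 : ((2:ℕ):ℝ) = 2 := by norm_num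
    rw [h22] at hσd
    linarith
  · exact gne3 d (by omega) σ hσ hσd

/-- Existence of the Gagliardo–Nirenberg constant G and lower bound for the modified energy. -/
theorem stmt4 (d : ℕ) (hd : 1 ≤ d) (σ : ℝ) (hσ : 0 < σ) (hσd : σ * d < 2) :
    ∃ G > (0 : ℝ), ∀ u : EuclideanSpace ℝ (Fin d) → ℂ,
      ContDiff ℝ 1 u → HasCompactSupport u →
      (1 / (2 * (1 + σ))) * (eLpNorm u (ENNReal.ofReal (2 + 2 * σ)) volume).toReal ^ (2 + 2 * σ) ≤
          (1 / 4) * (eLpNorm (fun x => ‖fderiv ℝ u x‖) 2 volume).toReal ^ (2 : ℝ) +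
            G * (eLpNorm u 2 volume).toReal ^ (2 + 4 * σ / (2 - σ * d)) ∧
      (1 / 2) * (eLpNorm (fun x => ‖fderiv ℝ u x‖) 2 volume).toReal ^ (2 : ℝ) -
          (1 / (2 * (1 + σ))) * (eLpNorm u (ENNReal.ofReal (2 + 2 * σ)) volume).toReal ^ (2 + 2 * σ) +
          G * (eLpNorm u 2 volume).toReal ^ (2 + 4 * σ / (2 - σ * d)) ≥
        (1 / 4) * (eLpNorm (fun x => ‖fderiv ℝ u x‖) 2 volume).toReal ^ (2 : ℝ) := by
  obtain ⟨Ce, hCtop, hCu⟩ := my_gn d hd σ hσ hσd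
  have hdR : (1:ℝ) ≤ (d:ℝ) := by exact_mod_cast hd
  have h2σd : (0:ℝ) < 2 - σ * d := by linarith
  set w₁ : ℝ := σ * d / 2 with hw₁def
  set w₂ : ℝ := (2 - σ * d) / 2 with hw₂def
  have hw₁ : 0 < w₁ := by rw [hw₁def]; positivity
  have hw₂ : 0 < w₂ := by rw [hw₂def]; positivity
  have hw : w₁ + w₂ = 1 := by rw [hw₁def, hw₂def]; ring
  set C : ℝ := Ce.toReal + 1 with hCdef
  have hC : 0 < C := by positivity
  set c : ℝ := C / (2 * (1 + σ)) with hcdef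
  have hc : 0 < c := by rw [hcdef]; positivity
  refine ⟨w₂ * (c * (4 * w₁) ^ w₁) ^ (1 / w₂), by positivity, ?_⟩
  intro u hu h2u
  set X : ℝ := (eLpNorm (fun x => ‖fderiv ℝ u x‖) 2 volume).toReal with hXdef
  set Y : ℝ := (eLpNorm u 2 volume).toReal with hYdef
  have hX0 : 0 ≤ X := ENNReal.toReal_nonneg
  have hY0 : 0 ≤ Y := ENNReal.toReal_nonneg
  have hq0 : (0:ℝ) < 2 + 2 * σ := by linarith
  have hu2top : eLpNorm u 2 volume ≠ ⊤ :=
    (hu.continuous.memLp_of_hasCompactSupport (μ := volume) (p := 2) h2u).eLpNorm_lt_top.ne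
  have hdu2top : eLpNorm (fderiv ℝ u) 2 volume ≠ ⊤ :=
    (((hu.fderiv_right (m := 0) le_rfl).continuous).memLp_of_hasCompactSupport
      (μ := volume) (p := 2) (h2u.fderiv ℝ)).eLpNorm_lt_top.ne
  -- the main real inequality
  have key : (eLpNorm u (ENNReal.ofReal (2 + 2 * σ)) volume).toReal ^ (2 + 2 * σ) ≤
      C * (X ^ (σ * (d:ℝ)) * Y ^ (2 + 2*σ - σ * (d:ℝ))) := by
    have hIeq : eLpNorm u (ENNReal.ofReal (2 + 2 * σ)) volume =
        (∫⁻ x, (‖u x‖₊ : ℝ≥0∞) ^ (2 + 2*σ)) ^ (1/(2 + 2*σ)) := by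
      rw [eLpNorm_eq_lintegral_rpow_nnnorm (by simp [ENNReal.ofReal_eq_zero]; linarith)
        ENNReal.ofReal_ne_top, ENNReal.toReal_ofReal hq0.le]
    have hRHSne : Ce * (eLpNorm (fderiv ℝ u) 2 volume) ^ (σ * (d:ℝ)) *
        (eLpNorm u 2 volume) ^ (2 + 2*σ - σ * (d:ℝ)) ≠ ⊤ := by
      refine ENNReal.mul_ne_top (ENNReal.mul_ne_top hCtop ?_) ?_
      · exact ENNReal.rpow_ne_top_of_nonneg (by positivity) hdu2top
      · exact ENNReal.rpow_ne_top_of_nonneg (by linarith) hu2top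
    have h2 : (∫⁻ x, (‖u x‖₊ : ℝ≥0∞) ^ (2 + 2*σ)).toReal ≤
        C * (X ^ (σ * (d:ℝ)) * Y ^ (2 + 2*σ - σ * (d:ℝ))) := by
      refine le_trans (ENNReal.toReal_mono hRHSne (hCu u hu h2u)) ?_
      rw [ENNReal.toReal_mul, ENNReal.toReal_mul, ← ENNReal.toReal_rpow, ← ENNReal.toReal_rpow]
      rw [hXdef, hYdef, eLpNorm_norm]
      calc Ce.toReal * (eLpNorm (fderiv ℝ u) 2 volume).toReal ^ (σ * (d:ℝ)) *
            (eLpNorm u 2 volume).toReal ^ (2 + 2*σ - σ * (d:ℝ))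
          ≤ C * (eLpNorm (fderiv ℝ u) 2 volume).toReal ^ (σ * (d:ℝ)) *
            (eLpNorm u 2 volume).toReal ^ (2 + 2*σ - σ * (d:ℝ)) := by
            have : Ce.toReal ≤ C := by rw [hCdef]; linarith
            gcongr
        _ = C * ((eLpNorm (fderiv ℝ u) 2 volume).toReal ^ (σ * (d:ℝ)) *
            (eLpNorm u 2 volume).toReal ^ (2 + 2*σ - σ * (d:ℝ))) := by ring
    calc (eLpNorm u (ENNReal.ofReal (2 + 2 * σ)) volume).toReal ^ (2 + 2 * σ)
        = (∫⁻ x, (‖u x‖₊ : ℝ≥0∞) ^ (2 + 2*σ)).toReal := by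
          rw [hIeq, ← ENNReal.toReal_rpow, ← Real.rpow_mul ENNReal.toReal_nonneg,
            one_div, inv_mul_cancel₀ hq0.ne', Real.rpow_one]
      _ ≤ C * (X ^ (σ * (d:ℝ)) * Y ^ (2 + 2*σ - σ * (d:ℝ))) := h2
  -- rewrite powers and apply Young's inequality
  have hXrw : X ^ (σ * (d:ℝ)) = (X ^ (2:ℝ)) ^ w₁ := by
    rw [← Real.rpow_mul hX0, hw₁def]
    congr 1
    ring
  have hYrw : Y ^ (2 + 2*σ - σ * (d:ℝ)) = (Y ^ (2 + 4 * σ / (2 - σ * d))) ^ w₂ := by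
    rw [← Real.rpow_mul hY0, hw₂def]
    congr 1
    field_simp
    ring
  have hyoung := my_young hw₁ hw₂ hw hc (Real.rpow_nonneg hX0 2)
    (Real.rpow_nonneg hY0 (2 + 4 * σ / (2 - σ * d)))
  have main : (1 / (2 * (1 + σ))) * (eLpNorm u (ENNReal.ofReal (2 + 2 * σ)) volume).toReal ^ (2 + 2 * σ) ≤
      (1 / 4) * X ^ (2:ℝ) + (w₂ * (c * (4 * w₁) ^ w₁) ^ (1 / w₂)) * Y ^ (2 + 4 * σ / (2 - σ * d)) := by
    have step1 : (1 / (2 * (1 + σ))) * (eLpNorm u (ENNReal.ofReal (2 + 2 * σ)) volume).toReal ^ (2 + 2 * σ)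
        ≤ c * ((X ^ (2:ℝ)) ^ w₁ * (Y ^ (2 + 4 * σ / (2 - σ * d))) ^ w₂) := by
      rw [← hXrw, ← hYrw, hcdef]
      calc (1 / (2 * (1 + σ))) * (eLpNorm u (ENNReal.ofReal (2 + 2 * σ)) volume).toReal ^ (2 + 2 * σ)
          ≤ (1 / (2 * (1 + σ))) * (C * (X ^ (σ * (d:ℝ)) * Y ^ (2 + 2*σ - σ * (d:ℝ)))) := by
            have hpos : (0:ℝ) < 1 / (2 * (1 + σ)) := by positivity
            exact mul_le_mul_of_nonneg_left key hpos.le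
        _ = C / (2 * (1 + σ)) * (X ^ (σ * (d:ℝ)) * Y ^ (2 + 2*σ - σ * (d:ℝ))) := by ring
    exact step1.trans hyoung
  constructor
  · exact main
  · linarith [main]
end

section
/- Let σ > 0 and set p = 2/(2σ+1) if 0 < σ < 1/2 and p = 4/3 if σ ≥ 1/2. Then there exists a constant C > 0 such that for every continuously differentiable function u : ℝ² → ℂ with compact support, writing F(u)(x) = |u(x)|^{2σ} u(x), one has ‖F(u)‖_{L^p} + ‖∇(F(u))‖_{L^p} ≤ C ( ‖u‖_{L²} + ‖∇u‖_{L²} )^{2σ+1}. -/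
open MeasureTheory

section CalcPart

open MeasureTheory Complex ContinuousLinearMap

noncomputable section

/-- The power map `z ↦ ‖z‖^c • z`. -/
def fpow (c : ℝ) (z : ℂ) : ℂ := (‖z‖ ^ c : ℝ) • z

/-- auxiliary: `z ↦ ‖z‖^(c/2-1) • z`. -/
def wmap (c : ℝ) (z : ℂ) : ℂ := (‖z‖ ^ (c / 2 - 1) : ℝ) • z

/-- `h ↦ re(conj w * h) • w` as a CLM. -/
def qform (w : ℂ) : ℂ →L[ℝ] ℂ :=
  (Complex.reCLM.comp ((ContinuousLinearMap.mul ℝ ℂ) ((starRingEnd ℂ) w))).smulRight w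

lemma qform_apply (w h : ℂ) : qform w h = ((starRingEnd ℂ) w * h).re • w := rfl

/-- Derivative of `fpow c` at `z`. -/
def Dmap (c : ℝ) (z : ℂ) : ℂ →L[ℝ] ℂ :=
  (‖z‖ ^ c : ℝ) • ContinuousLinearMap.id ℝ ℂ + c • qform (wmap c z)

lemma norm_wmap (c : ℝ) (hc : 0 < c) (z : ℂ) : ‖wmap c z‖ = ‖z‖ ^ (c / 2) := by
  rcases eq_or_ne z 0 with rfl | hz
  · simp [wmap, Real.zero_rpow (by positivity : c / 2 ≠ 0)]
  · have h0 : (0:ℝ) < ‖z‖ := norm_pos_iff.2 hz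
    rw [wmap, norm_smul, Real.norm_eq_abs,
      _root_.abs_of_nonneg (Real.rpow_nonneg (norm_nonneg z) _)]
    rw [← Real.rpow_add_one h0.ne']
    norm_num

lemma norm_fpow (c : ℝ) (hc : 0 < c) (z : ℂ) : ‖fpow c z‖ = ‖z‖ ^ (c + 1) := by
  rcases eq_or_ne z 0 with rfl | hz
  · simp [fpow, Real.zero_rpow (by positivity : c + 1 ≠ 0)]
  · have h0 : (0:ℝ) < ‖z‖ := norm_pos_iff.2 hz
    rw [fpow, norm_smul, Real.norm_eq_abs,
      _root_.abs_of_nonneg (Real.rpow_nonneg (norm_nonneg z) _), ← Real.rpow_add_one h0.ne']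

lemma norm_Dmap_le (c : ℝ) (hc : 0 < c) (z : ℂ) : ‖Dmap c z‖ ≤ (c + 1) * ‖z‖ ^ c := by
  apply ContinuousLinearMap.opNorm_le_bound _ (by positivity)
  intro h
  have h1 : ‖qform (wmap c z) h‖ ≤ ‖z‖ ^ c * ‖h‖ := by
    rw [qform_apply, norm_smul, Real.norm_eq_abs]
    calc |((starRingEnd ℂ) (wmap c z) * h).re| * ‖wmap c z‖
        ≤ ‖(starRingEnd ℂ) (wmap c z) * h‖ * ‖wmap c z‖ := by
          gcongr; exact Complex.abs_re_le_norm _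
      _ ≤ (‖wmap c z‖ * ‖h‖) * ‖wmap c z‖ := by
          gcongr
          rw [norm_mul, RingHomIsometric.norm_map]
      _ = ‖wmap c z‖ ^ (2:ℕ) * ‖h‖ := by ring
      _ = ‖z‖ ^ c * ‖h‖ := by
          rw [norm_wmap c hc, ← Real.rpow_natCast (‖z‖ ^ (c/2)) 2,
            ← Real.rpow_mul (norm_nonneg z)]
          norm_num
  calc ‖Dmap c z h‖ = ‖(‖z‖ ^ c : ℝ) • h + c • (qform (wmap c z) h)‖ := rfl
    _ ≤ ‖(‖z‖ ^ c : ℝ) • h‖ + ‖c • (qform (wmap c z) h)‖ := norm_add_le _ _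
    _ ≤ ‖z‖ ^ c * ‖h‖ + c * (‖z‖ ^ c * ‖h‖) := by
        rw [norm_smul, norm_smul, Real.norm_eq_abs, Real.norm_eq_abs,
          _root_.abs_of_nonneg (Real.rpow_nonneg (norm_nonneg z) _), _root_.abs_of_nonneg hc.le]
        gcongr
    _ = (c + 1) * ‖z‖ ^ c * ‖h‖ := by ring

lemma continuous_rpow_smul {a : ℝ} (ha : 0 < a + 1) :
    Continuous (fun z : ℂ => (‖z‖ ^ a : ℝ) • z) := by
  rw [continuous_iff_continuousAt]
  intro z
  rcases eq_or_ne z 0 with rfl | hz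
  · rw [ContinuousAt]
    have hz0 : (‖(0:ℂ)‖ ^ a : ℝ) • (0:ℂ) = 0 := by simp
    rw [hz0, tendsto_zero_iff_norm_tendsto_zero]
    have key : ∀ w : ℂ, ‖(‖w‖ ^ a : ℝ) • w‖ = ‖w‖ ^ (a + 1) := by
      intro w
      rcases eq_or_ne w 0 with rfl | hw
      · simp [Real.zero_rpow ha.ne']
      · have h0 : (0:ℝ) < ‖w‖ := norm_pos_iff.2 hw
        rw [norm_smul, Real.norm_eq_abs, _root_.abs_of_nonneg (Real.rpow_nonneg (norm_nonneg w) _),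
          ← Real.rpow_add_one h0.ne']
    simp_rw [key]
    have : ContinuousAt (fun w : ℂ => ‖w‖ ^ (a + 1)) 0 := by
      refine (Real.continuousAt_rpow_const _ _ (Or.inr ha.le)).comp continuous_norm.continuousAt
    simpa [Real.zero_rpow ha.ne'] using this.tendsto
  · have h0 : ‖z‖ ≠ 0 := norm_ne_zero_iff.2 hz
    exact ((Real.continuousAt_rpow_const _ _ (Or.inl h0)).comp
      continuous_norm.continuousAt).smul continuousAt_id

lemma continuous_qform : Continuous qform := by
  have h1 : Continuous fun w : ℂ =>
      (Complex.reCLM.comp ((ContinuousLinearMap.mul ℝ ℂ) ((starRingEnd ℂ) w))) := by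
    exact ((ContinuousLinearMap.compL ℝ ℂ ℂ ℝ Complex.reCLM).continuous).comp
      ((ContinuousLinearMap.mul ℝ ℂ).continuous.comp continuous_conj)
  exact ((ContinuousLinearMap.smulRightL ℝ ℂ ℂ).continuous.comp h1).clm_apply continuous_id

lemma continuous_Dmap (c : ℝ) (hc : 0 < c) : Continuous (Dmap c) := by
  apply Continuous.add
  · exact (continuous_norm.rpow_const (fun z => Or.inr hc.le)).smul continuous_const
  · have hw : Continuous (wmap c) := continuous_rpow_smul (by linarith : 0 < (c/2 - 1) + 1)
    exact (continuous_qform.comp hw).const_smul c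

end

noncomputable section

lemma fpow_eq (c : ℝ) : fpow c = fun z : ℂ => ((‖z‖ ^ (2:ℕ) : ℝ) ^ (c/2) : ℝ) • z := by
  funext z
  rw [fpow, ← Real.rpow_natCast ‖z‖ 2, ← Real.rpow_mul (norm_nonneg z)]
  norm_num
  left; ring_nf

lemma Dmap_zero (c : ℝ) (hc : 0 < c) : Dmap c 0 = 0 := by
  ext h
  simp [Dmap, qform_apply, wmap, Real.zero_rpow hc.ne']

lemma real_inner_complex (z h : ℂ) : (inner ℝ z h : ℝ) = ((starRingEnd ℂ) z * h).re := by rw [Complex.inner, mul_comm]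

lemma hasFDerivAt_fpow (c : ℝ) (hc : 0 < c) (z : ℂ) :
    HasFDerivAt (fpow c) (Dmap c z) z := by
  rcases eq_or_ne z 0 with rfl | hz
  · rw [Dmap_zero c hc]
    rw [hasFDerivAt_iff_isLittleO_nhds_zero]
    simp only [zero_add, ContinuousLinearMap.zero_apply, sub_zero]
    have hf0 : fpow c 0 = 0 := by simp [fpow]
    rw [hf0]
    rw [Asymptotics.isLittleO_iff]
    intro ε hε
    have hcont : Filter.Tendsto (fun h : ℂ => ‖h‖ ^ c) (nhds 0) (nhds 0) := by
      have : ContinuousAt (fun h : ℂ => ‖h‖ ^ c) 0 :=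
        (Real.continuousAt_rpow_const _ _ (Or.inr hc.le)).comp continuous_norm.continuousAt
      simpa [Real.zero_rpow hc.ne'] using this.tendsto
    filter_upwards [hcont.eventually (eventually_le_nhds hε)] with h hh
    rw [fpow, sub_zero, norm_smul, Real.norm_eq_abs,
      _root_.abs_of_nonneg (Real.rpow_nonneg (norm_nonneg h) _)]
    exact mul_le_mul_of_nonneg_right hh (norm_nonneg h)
  · have h0 : (0:ℝ) < ‖z‖ := norm_pos_iff.2 hz
    have hsq : HasFDerivAt (fun w : ℂ => ‖w‖ ^ (2:ℕ)) ((2:ℕ) • innerSL ℝ z) z :=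
      (hasStrictFDerivAt_norm_sq z).hasFDerivAt
    have hsqz : (‖z‖ ^ (2:ℕ) : ℝ) ≠ 0 := by positivity
    have hg : HasFDerivAt (fun w : ℂ => ((‖w‖ ^ (2:ℕ) : ℝ) ^ (c/2) : ℝ))
        ((c/2 * (‖z‖ ^ (2:ℕ) : ℝ) ^ (c/2 - 1)) • ((2:ℕ) • innerSL ℝ z)) z :=
      by have := (Real.hasDerivAt_rpow_const (x := ‖z‖ ^ (2:ℕ)) (p := c/2) (Or.inl hsqz)).comp_hasFDerivAt z hsq
         exact this
    have hf : HasFDerivAt (fun w : ℂ => ((‖w‖ ^ (2:ℕ) : ℝ) ^ (c/2) : ℝ) • w)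
        (((‖z‖ ^ (2:ℕ) : ℝ) ^ (c/2) : ℝ) • ContinuousLinearMap.id ℝ ℂ +
          ((c/2 * (‖z‖ ^ (2:ℕ) : ℝ) ^ (c/2 - 1)) • ((2:ℕ) • innerSL ℝ z)).smulRight z) z :=
      hg.smul (hasFDerivAt_id z)
    rw [fpow_eq c]
    convert hf using 1
    ext h
    simp only [Dmap, ContinuousLinearMap.add_apply, ContinuousLinearMap.smul_apply,
      ContinuousLinearMap.id_apply, qform_apply, ContinuousLinearMap.smulRight_apply,
      ContinuousLinearMap.coe_smul', Pi.smul_apply, coe_innerSL_apply, innerSL_apply_apply]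
    have e1 : ((‖z‖ ^ (2:ℕ) : ℝ) ^ (c/2) : ℝ) = ‖z‖ ^ c := by
      rw [← Real.rpow_natCast ‖z‖ 2, ← Real.rpow_mul (norm_nonneg z)]; ring_nf
    have e2 : ((‖z‖ ^ (2:ℕ) : ℝ) ^ (c/2 - 1) : ℝ) = ‖z‖ ^ (c - 2) := by
      rw [← Real.rpow_natCast ‖z‖ 2, ← Real.rpow_mul (norm_nonneg z)]
      ring_nf
    have e3 : (inner ℝ z h : ℝ) = ((starRingEnd ℂ) z * h).re := by rw [Complex.inner, mul_comm]
    rw [e1, e2, wmap, e3]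
    set r : ℝ := ‖z‖ ^ (c/2 - 1) with hr
    have hr2 : r * r = ‖z‖ ^ (c - 2) := by
      rw [hr, ← Real.rpow_add h0]; ring_nf
    have hconj : (starRingEnd ℂ) ((r : ℝ) • z) * h = (r : ℝ) • ((starRingEnd ℂ) z * h) := by
      simp [Complex.real_smul]; ring
    rw [hconj, Complex.smul_re]
    simp only [smul_smul, smul_eq_mul]
    congr 1
    rw [← hr2]; ring

lemma contDiff_fpow (c : ℝ) (hc : 0 < c) : ContDiff ℝ 1 (fpow c) := by
  rw [contDiff_one_iff_fderiv]
  refine ⟨fun z => (hasFDerivAt_fpow c hc z).differentiableAt, ?_⟩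
  have : fderiv ℝ (fpow c) = Dmap c := funext fun z => (hasFDerivAt_fpow c hc z).fderiv
  rw [this]
  exact continuous_Dmap c hc

variable {E : Type*} [NormedAddCommGroup E] [NormedSpace ℝ E]

set_option maxHeartbeats 1000000 in
lemma contDiff_fpow_comp {c : ℝ} (hc : 0 < c) {u : E → ℂ} (hu : ContDiff ℝ 1 u) :
    ContDiff ℝ 1 (fun x => fpow c (u x)) :=
  (contDiff_fpow c hc).comp hu

lemma hasCompactSupport_fpow_comp {c : ℝ} {u : E → ℂ} (hu : HasCompactSupport u) :
    HasCompactSupport (fun x => fpow c (u x)) :=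
  HasCompactSupport.comp_left (g := fpow c) hu (by simp [fpow])

lemma norm_fderiv_fpow_comp_le {c : ℝ} (hc : 0 < c) {u : E → ℂ} (hu : ContDiff ℝ 1 u) (x : E) :
    ‖fderiv ℝ (fun y => fpow c (u y)) x‖ ≤ (c + 1) * (‖u x‖ ^ c * ‖fderiv ℝ u x‖) := by
  have hd : HasFDerivAt (fun y => fpow c (u y))
      ((Dmap c (u x)).comp (fderiv ℝ u x)) x :=
    (hasFDerivAt_fpow c hc (u x)).comp x (hu.differentiable one_ne_zero x).hasFDerivAt
  rw [hd.fderiv]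
  calc ‖(Dmap c (u x)).comp (fderiv ℝ u x)‖ ≤ ‖Dmap c (u x)‖ * ‖fderiv ℝ u x‖ :=
        ContinuousLinearMap.opNorm_comp_le _ _
    _ ≤ ((c + 1) * ‖u x‖ ^ c) * ‖fderiv ℝ u x‖ := by
        gcongr; exact norm_Dmap_le c hc (u x)
    _ = (c + 1) * (‖u x‖ ^ c * ‖fderiv ℝ u x‖) := by ring

end

lemma fpow_eq_mul (c : ℝ) (z : ℂ) : fpow c z = ((‖z‖ ^ c : ℝ) : ℂ) * z := by
  rw [fpow, Complex.real_smul]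

end CalcPart

section AnalPart
open MeasureTheory ENNReal NNReal Complex ContinuousLinearMap

noncomputable section

local notation "E2" => EuclideanSpace ℝ (Fin 2)

def SobC : ℝ≥0 := eLpNormLESNormFDerivOneConst (volume : Measure E2) 2

lemma sobolev2 {v : E2 → ℂ} (hv : ContDiff ℝ 1 v) (h2v : HasCompactSupport v) :
    eLpNorm v 2 volume ≤ (SobC : ℝ≥0∞) * eLpNorm (fderiv ℝ v) 1 volume := by
  have hrank : Module.finrank ℝ E2 = 2 := finrank_euclideanSpace_fin
  have hp : NNReal.HolderConjugate (Module.finrank ℝ E2) 2 := by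
    rw [hrank]; exact ⟨by push_cast; rw [← two_mul, mul_inv_cancel₀ two_ne_zero, inv_one], by norm_num, by norm_num⟩
  have := eLpNorm_le_eLpNorm_fderiv_one (volume : Measure E2) hv h2v hp
  simpa [SobC] using this

/-- total H¹ norm -/
def Ntot (u : E2 → ℂ) : ℝ≥0∞ := eLpNorm u 2 volume + eLpNorm (fderiv ℝ u) 2 volume

lemma keystep {c : ℝ} (hc : 1 ≤ c) {u : E2 → ℂ} (hu : ContDiff ℝ 1 u)
    (h2u : HasCompactSupport u) :
    eLpNorm u (ENNReal.ofReal (2 * (c + 1))) volume ^ (c + 1) ≤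
      (SobC : ℝ≥0∞) * ENNReal.ofReal (c + 1) *
        (eLpNorm u (ENNReal.ofReal (2 * c)) volume ^ c *
          eLpNorm (fderiv ℝ u) 2 volume) := by
  have hc0 : (0:ℝ) < c := by linarith
  have hc1 : (0:ℝ) < c + 1 := by linarith
  set v := fun x => fpow c (u x) with hv
  have hvC : ContDiff ℝ 1 v := contDiff_fpow_comp hc0 hu
  have hvS : HasCompactSupport v := hasCompactSupport_fpow_comp h2u
  have e1 : eLpNorm u (ENNReal.ofReal (2 * (c + 1))) volume ^ (c + 1) = eLpNorm v 2 volume := by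
    have : eLpNorm v 2 volume = eLpNorm (fun x => ‖u x‖ ^ (c+1)) 2 volume := by
      apply eLpNorm_congr_norm_ae
      filter_upwards with x
      rw [norm_fpow c hc0, Real.norm_eq_abs,
        _root_.abs_of_nonneg (Real.rpow_nonneg (norm_nonneg _) _)]
    have hexp : (2:ℝ≥0∞) * ENNReal.ofReal (c+1) = ENNReal.ofReal (2*(c+1)) := by
      rw [← ENNReal.ofReal_ofNat 2, ← ENNReal.ofReal_mul (by norm_num)]
    rw [this, eLpNorm_norm_rpow u hc1, hexp]
  have step2 : eLpNorm v 2 volume ≤ (SobC : ℝ≥0∞) * eLpNorm (fderiv ℝ v) 1 volume :=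
    sobolev2 hvC hvS
  have step3 : eLpNorm (fderiv ℝ v) 1 volume ≤
      (c+1).toNNReal • eLpNorm (fun x => ‖u x‖ ^ c * ‖fderiv ℝ u x‖) 1 volume := by
    apply eLpNorm_le_nnreal_smul_eLpNorm_of_ae_le_mul
    filter_upwards with x
    have h1 := norm_fderiv_fpow_comp_le hc0 hu x
    have h2 : ‖‖u x‖ ^ c * ‖fderiv ℝ u x‖‖ = ‖u x‖ ^ c * ‖fderiv ℝ u x‖ := by
      rw [Real.norm_eq_abs, _root_.abs_of_nonneg (by positivity)]
    rw [← NNReal.coe_le_coe]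
    push_cast
    rw [h2, Real.coe_toNNReal _ hc1.le]
    exact h1
  have step3' : eLpNorm (fderiv ℝ v) 1 volume ≤
      (((c+1).toNNReal : ℝ≥0∞)) * eLpNorm (fun x => ‖u x‖ ^ c * ‖fderiv ℝ u x‖) 1 volume := by
    simpa [ENNReal.smul_def] using step3
  have hmeas1 : AEStronglyMeasurable (fun x : E2 => ‖u x‖ ^ c) volume :=
    (hu.continuous.norm.rpow_const (fun x => Or.inr hc0.le)).aestronglyMeasurable
  have hmeas2 : AEStronglyMeasurable (fun x : E2 => ‖fderiv ℝ u x‖) volume :=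
    ((contDiff_one_iff_fderiv.mp hu).2.norm).aestronglyMeasurable
  have step4 : eLpNorm (fun x => ‖u x‖ ^ c * ‖fderiv ℝ u x‖) 1 volume ≤
      eLpNorm (fun x => ‖u x‖ ^ c) 2 volume * eLpNorm (fun x => ‖fderiv ℝ u x‖) 2 volume := by
    have hT : ENNReal.HolderTriple 2 2 1 := ⟨by rw [ENNReal.inv_two_add_inv_two, inv_one]⟩
    simpa only [ENNReal.coe_one, one_mul] using
      eLpNorm_le_eLpNorm_mul_eLpNorm'_of_norm hmeas1 hmeas2 (fun a b => a * b) 1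
        (by filter_upwards with x; rw [NNReal.coe_one, one_mul, norm_mul])
  have e5 : eLpNorm (fun x : E2 => ‖u x‖ ^ c) 2 volume =
      eLpNorm u (ENNReal.ofReal (2 * c)) volume ^ c := by
    have hexp : (2:ℝ≥0∞) * ENNReal.ofReal c = ENNReal.ofReal (2*c) := by
      rw [← ENNReal.ofReal_ofNat 2, ← ENNReal.ofReal_mul (by norm_num)]
    rw [eLpNorm_norm_rpow u hc0, hexp]
  have e6 : eLpNorm (fun x : E2 => ‖fderiv ℝ u x‖) 2 volume = eLpNorm (fderiv ℝ u) 2 volume :=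
    eLpNorm_norm _
  calc eLpNorm u (ENNReal.ofReal (2 * (c + 1))) volume ^ (c + 1)
      = eLpNorm v 2 volume := e1
    _ ≤ (SobC : ℝ≥0∞) * eLpNorm (fderiv ℝ v) 1 volume := step2
    _ ≤ (SobC : ℝ≥0∞) * ((((c+1).toNNReal : ℝ≥0∞)) *
          eLpNorm (fun x => ‖u x‖ ^ c * ‖fderiv ℝ u x‖) 1 volume) := by gcongr
    _ ≤ (SobC : ℝ≥0∞) * ((((c+1).toNNReal : ℝ≥0∞)) *
          (eLpNorm (fun x => ‖u x‖ ^ c) 2 volume *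
            eLpNorm (fun x => ‖fderiv ℝ u x‖) 2 volume)) := by gcongr
    _ = (SobC : ℝ≥0∞) * ENNReal.ofReal (c + 1) *
          (eLpNorm u (ENNReal.ofReal (2 * c)) volume ^ c * eLpNorm (fderiv ℝ u) 2 volume) := by
        rw [e5, e6, show ENNReal.ofReal (c+1) = ((c+1).toNNReal : ℝ≥0∞) from rfl]
        ring

lemma even_bound (n : ℕ) : ∃ C : ℝ≥0∞, C ≠ ⊤ ∧ ∀ u : E2 → ℂ, ContDiff ℝ 1 u →
    HasCompactSupport u →
    eLpNorm u (ENNReal.ofReal (2 * ((n:ℝ) + 1))) volume ≤ C * Ntot u := by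
  induction n with
  | zero =>
    refine ⟨1, one_ne_top, fun u hu h2u => ?_⟩
    have h2 : ENNReal.ofReal (2 * ((0:ℕ):ℝ) + 2) = 2 := by
      norm_num
    rw [show (2 * (((0:ℕ):ℝ) + 1)) = 2 * ((0:ℕ):ℝ) + 2 by ring, h2, one_mul]
    exact self_le_add_right _ _
  | succ n ih =>
    obtain ⟨C, hC, hCb⟩ := ih
    set c : ℝ := (n:ℝ) + 1 with hcdef
    have hc : 1 ≤ c := by rw [hcdef]; have : (0:ℝ) ≤ (n:ℝ) := Nat.cast_nonneg n; linarith
    have hc0 : (0:ℝ) < c := by linarith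
    have hc1 : (0:ℝ) < c + 1 := by linarith
    set K : ℝ≥0∞ := (SobC : ℝ≥0∞) * ENNReal.ofReal (c + 1) * C ^ c with hKdef
    have hK : K ≠ ⊤ := by
      apply ENNReal.mul_ne_top
      apply ENNReal.mul_ne_top coe_ne_top ofReal_ne_top
      exact ENNReal.rpow_ne_top_of_nonneg hc0.le hC
    refine ⟨K ^ (1/(c+1)), ENNReal.rpow_ne_top_of_nonneg (by positivity) hK, fun u hu h2u => ?_⟩
    have hcast : (2 * (((n+1:ℕ)):ℝ) + 2) = 2 * (c + 1) := by push_cast [hcdef]; ring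
    have key := keystep hc hu h2u
    have hY : eLpNorm u (ENNReal.ofReal (2 * c)) volume ≤ C * Ntot u := by
      have : (2 * ((n:ℝ) + 1)) = 2 * c := by rw [hcdef]
      rw [← this]
      exact hCb u hu h2u
    have hG : eLpNorm (fderiv ℝ u) 2 volume ≤ Ntot u := le_add_self
    have main : eLpNorm u (ENNReal.ofReal (2 * (c+1))) volume ^ (c + 1) ≤ K * Ntot u ^ (c + 1) := by
      calc eLpNorm u (ENNReal.ofReal (2 * (c+1))) volume ^ (c + 1)
          ≤ (SobC : ℝ≥0∞) * ENNReal.ofReal (c + 1) *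
            (eLpNorm u (ENNReal.ofReal (2 * c)) volume ^ c * eLpNorm (fderiv ℝ u) 2 volume) := key
        _ ≤ (SobC : ℝ≥0∞) * ENNReal.ofReal (c + 1) * ((C * Ntot u) ^ c * Ntot u) := by
            gcongr
        _ = K * Ntot u ^ (c + 1) := by
            rw [ENNReal.mul_rpow_of_nonneg _ _ hc0.le, hKdef,
              ENNReal.rpow_add_of_nonneg _ _ hc0.le zero_le_one, ENNReal.rpow_one]
            ring
    have h1c : (0:ℝ) ≤ 1/(c+1) := by positivity
    calc eLpNorm u (ENNReal.ofReal (2 * (((n+1:ℕ):ℝ) + 1))) volume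
        = (eLpNorm u (ENNReal.ofReal (2 * (c+1))) volume ^ (c+1)) ^ (1/(c+1)) := by
          rw [← ENNReal.rpow_mul, mul_one_div_cancel hc1.ne', ENNReal.rpow_one]
          congr 2
          push_cast [hcdef]; ring
      _ ≤ (K * Ntot u ^ (c+1)) ^ (1/(c+1)) := ENNReal.rpow_le_rpow main h1c
      _ = K ^ (1/(c+1)) * Ntot u := by
          rw [ENNReal.mul_rpow_of_nonneg _ _ h1c, ← ENNReal.rpow_mul,
            mul_one_div_cancel hc1.ne', ENNReal.rpow_one]

lemma interp {q Q : ℝ} (h2q : 2 ≤ q) (hqQ : q ≤ Q) {u : E2 → ℂ} (hu : Continuous u) :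
    eLpNorm u (ENNReal.ofReal q) volume ≤
      eLpNorm u 2 volume + eLpNorm u (ENNReal.ofReal Q) volume := by
  rcases eq_or_lt_of_le h2q with rfl | h2q'
  · rw [show ENNReal.ofReal (2:ℝ) = 2 by norm_num]
    exact self_le_add_right _ _
  rcases eq_or_lt_of_le hqQ with rfl | hqQ'
  · exact le_add_self
  have hq0 : (0:ℝ) < q := by linarith
  have hQ0 : (0:ℝ) < Q := by linarith
  have hQ2 : (2:ℝ) < Q := by linarith
  have hden : (0:ℝ) < 1/2 - 1/Q := by
    rw [sub_pos]; apply one_div_lt_one_div_of_lt <;> linarith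
  have hnum : (0:ℝ) < 1/q - 1/Q := by
    rw [sub_pos]; apply one_div_lt_one_div_of_lt <;> linarith
  set θ : ℝ := (1/q - 1/Q)/(1/2 - 1/Q) with hθdef
  have hθ0 : 0 < θ := div_pos hnum hden
  have hθ1 : θ < 1 := by
    rw [hθdef, div_lt_one hden]
    have : (0:ℝ) < 1/2 - 1/q := by
      rw [sub_pos]; apply one_div_lt_one_div_of_lt <;> linarith
    linarith
  have h1θ : 0 < 1 - θ := by linarith
  have hkey : θ/2 + (1-θ)/Q = 1/q := by
    have h1 : θ * (1/2 - 1/Q) = 1/q - 1/Q := div_mul_cancel₀ _ hden.ne'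
    ring_nf at h1 ⊢
    linarith
  set A : ℝ := 2/θ with hAdef
  set B : ℝ := Q/(1-θ) with hBdef
  have hA0 : 0 < A := by positivity
  have hB0 : 0 < B := by positivity
  have hmeas1 : AEStronglyMeasurable (fun x : E2 => ‖u x‖ ^ θ) volume :=
    (hu.norm.rpow_const (fun x => Or.inr hθ0.le)).aestronglyMeasurable
  have hmeas2 : AEStronglyMeasurable (fun x : E2 => ‖u x‖ ^ (1-θ)) volume :=
    (hu.norm.rpow_const (fun x => Or.inr h1θ.le)).aestronglyMeasurable
  have step1 : eLpNorm u (ENNReal.ofReal q) volume =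
      eLpNorm (fun x => ‖u x‖ ^ θ * ‖u x‖ ^ (1-θ)) (ENNReal.ofReal q) volume := by
    apply eLpNorm_congr_norm_ae
    filter_upwards with x
    rw [Real.norm_eq_abs, _root_.abs_of_nonneg (by positivity),
      ← Real.rpow_add_of_nonneg (norm_nonneg _) hθ0.le h1θ.le]
    norm_num
  have hexps : 1 / ENNReal.ofReal q = 1 / ENNReal.ofReal A + 1 / ENNReal.ofReal B := by
    rw [one_div, one_div, one_div, ← ENNReal.ofReal_inv_of_pos hq0,
      ← ENNReal.ofReal_inv_of_pos hA0, ← ENNReal.ofReal_inv_of_pos hB0,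
      ← ENNReal.ofReal_add (by positivity) (by positivity)]
    congr 1
    rw [hAdef, hBdef, inv_div, inv_div, hkey, one_div]
  have step2 : eLpNorm (fun x => ‖u x‖ ^ θ * ‖u x‖ ^ (1-θ)) (ENNReal.ofReal q) volume ≤
      eLpNorm (fun x => ‖u x‖ ^ θ) (ENNReal.ofReal A) volume *
        eLpNorm (fun x => ‖u x‖ ^ (1-θ)) (ENNReal.ofReal B) volume := by
    have hT : ENNReal.HolderTriple _ _ _ := ⟨by simpa only [one_div] using hexps.symm⟩
    simpa only [ENNReal.coe_one, one_mul] using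
      eLpNorm_le_eLpNorm_mul_eLpNorm'_of_norm hmeas1 hmeas2 (fun a b => a * b) 1
        (by filter_upwards with x; rw [NNReal.coe_one, one_mul, norm_mul])
  have e3 : eLpNorm (fun x : E2 => ‖u x‖ ^ θ) (ENNReal.ofReal A) volume =
      eLpNorm u 2 volume ^ θ := by
    rw [eLpNorm_norm_rpow u hθ0]
    congr 1
    rw [← ENNReal.ofReal_mul hA0.le, hAdef, div_mul_cancel₀ _ hθ0.ne']
    norm_num
  have e4 : eLpNorm (fun x : E2 => ‖u x‖ ^ (1-θ)) (ENNReal.ofReal B) volume =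
      eLpNorm u (ENNReal.ofReal Q) volume ^ (1-θ) := by
    rw [eLpNorm_norm_rpow u h1θ]
    congr 1
    rw [← ENNReal.ofReal_mul hB0.le, hBdef, div_mul_cancel₀ _ h1θ.ne']
  set S : ℝ≥0∞ := eLpNorm u 2 volume + eLpNorm u (ENNReal.ofReal Q) volume with hS
  calc eLpNorm u (ENNReal.ofReal q) volume
      ≤ eLpNorm u 2 volume ^ θ * eLpNorm u (ENNReal.ofReal Q) volume ^ (1-θ) := by
        rw [step1, ← e3, ← e4]; exact step2
    _ ≤ S ^ θ * S ^ (1-θ) := by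
        gcongr
        · exact self_le_add_right _ _
        · exact le_add_self
    _ = S := by
        rw [← ENNReal.rpow_add_of_nonneg _ _ hθ0.le h1θ.le]
        norm_num

lemma gns {q : ℝ} (hq : 2 ≤ q) : ∃ C : ℝ≥0∞, C ≠ ⊤ ∧ ∀ u : E2 → ℂ, ContDiff ℝ 1 u →
    HasCompactSupport u → eLpNorm u (ENNReal.ofReal q) volume ≤ C * Ntot u := by
  obtain ⟨n, hn⟩ := exists_nat_ge q
  obtain ⟨C, hC, hCb⟩ := even_bound n
  refine ⟨1 + C, by simp [hC], fun u hu h2u => ?_⟩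
  have hqQ : q ≤ 2 * ((n:ℝ) + 1) := by linarith
  calc eLpNorm u (ENNReal.ofReal q) volume
      ≤ eLpNorm u 2 volume + eLpNorm u (ENNReal.ofReal (2 * ((n:ℝ)+1))) volume :=
        interp hq hqQ hu.continuous
    _ ≤ 1 * Ntot u + C * Ntot u := by
        apply add_le_add
        · rw [one_mul]; exact self_le_add_right _ _
        · exact hCb u hu h2u
    _ = (1 + C) * Ntot u := (add_mul _ _ _).symm

lemma main_est {c p a : ℝ} (hc : 0 < c) (hp : 0 < p) (ha : 0 < a)
    (hpa : 1/p = 1/a + 1/2) (hqF : 2 ≤ p*(c+1)) (hca : 2 ≤ c*a) :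
    ∃ C : ℝ≥0∞, C ≠ ⊤ ∧ ∀ u : E2 → ℂ, ContDiff ℝ 1 u → HasCompactSupport u →
      eLpNorm (fun x => fpow c (u x)) (ENNReal.ofReal p) volume +
        eLpNorm (fderiv ℝ (fun x => fpow c (u x))) (ENNReal.ofReal p) volume ≤
        C * Ntot u ^ (c+1) := by
  have hc1 : (0:ℝ) < c + 1 := by linarith
  obtain ⟨C1, hC1, hC1b⟩ := gns (q := p*(c+1)) hqF
  obtain ⟨C2, hC2, hC2b⟩ := gns (q := c*a) hca
  refine ⟨C1^(c+1) + ENNReal.ofReal (c+1) * C2^c, ?_, fun u hu h2u => ?_⟩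
  · apply ENNReal.add_ne_top.mpr
    constructor
    · exact ENNReal.rpow_ne_top_of_nonneg hc1.le hC1
    · exact ENNReal.mul_ne_top ofReal_ne_top (ENNReal.rpow_ne_top_of_nonneg hc.le hC2)
  have hG : eLpNorm (fderiv ℝ u) 2 volume ≤ Ntot u := le_add_self
  -- term 1
  have t1 : eLpNorm (fun x => fpow c (u x)) (ENNReal.ofReal p) volume =
      eLpNorm u (ENNReal.ofReal (p*(c+1))) volume ^ (c+1) := by
    have h1 : eLpNorm (fun x => fpow c (u x)) (ENNReal.ofReal p) volume =
        eLpNorm (fun x => ‖u x‖ ^ (c+1)) (ENNReal.ofReal p) volume := by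
      apply eLpNorm_congr_norm_ae
      filter_upwards with x
      rw [norm_fpow c hc, Real.norm_eq_abs,
        _root_.abs_of_nonneg (Real.rpow_nonneg (norm_nonneg _) _)]
    rw [h1, eLpNorm_norm_rpow u hc1, ← ENNReal.ofReal_mul hp.le]
  have T1 : eLpNorm (fun x => fpow c (u x)) (ENNReal.ofReal p) volume ≤
      C1^(c+1) * Ntot u ^ (c+1) := by
    rw [t1, ← ENNReal.mul_rpow_of_nonneg _ _ hc1.le]
    exact ENNReal.rpow_le_rpow (hC1b u hu h2u) hc1.le
  -- term 2
  have step3 : eLpNorm (fderiv ℝ (fun x => fpow c (u x))) (ENNReal.ofReal p) volume ≤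
      ENNReal.ofReal (c+1) *
        eLpNorm (fun x => ‖u x‖ ^ c * ‖fderiv ℝ u x‖) (ENNReal.ofReal p) volume := by
    have h := eLpNorm_le_nnreal_smul_eLpNorm_of_ae_le_mul (μ := (volume : Measure E2))
      (c := (c+1).toNNReal) (f := fderiv ℝ (fun x => fpow c (u x)))
      (g := fun x => ‖u x‖ ^ c * ‖fderiv ℝ u x‖) ?_ (ENNReal.ofReal p)
    · simpa [ENNReal.smul_def, ENNReal.ofReal] using h
    · filter_upwards with x
      have h1 := norm_fderiv_fpow_comp_le hc hu x
      have h2 : ‖‖u x‖ ^ c * ‖fderiv ℝ u x‖‖ = ‖u x‖ ^ c * ‖fderiv ℝ u x‖ := by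
        rw [Real.norm_eq_abs, _root_.abs_of_nonneg (by positivity)]
      rw [← NNReal.coe_le_coe]
      push_cast
      rw [h2, Real.coe_toNNReal _ hc1.le]
      exact h1
  have hmeas1 : AEStronglyMeasurable (fun x : E2 => ‖u x‖ ^ c) volume :=
    (hu.continuous.norm.rpow_const (fun x => Or.inr hc.le)).aestronglyMeasurable
  have hmeas2 : AEStronglyMeasurable (fun x : E2 => ‖fderiv ℝ u x‖) volume :=
    ((contDiff_one_iff_fderiv.mp hu).2.norm).aestronglyMeasurable
  have hexps : 1 / ENNReal.ofReal p = 1 / ENNReal.ofReal a + 1 / (2 : ℝ≥0∞) := by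
    rw [show (2:ℝ≥0∞) = ENNReal.ofReal 2 by norm_num]
    rw [one_div, one_div, one_div, ← ENNReal.ofReal_inv_of_pos hp,
      ← ENNReal.ofReal_inv_of_pos ha, ← ENNReal.ofReal_inv_of_pos (by norm_num),
      ← ENNReal.ofReal_add (by positivity) (by positivity)]
    congr 1
    rw [← one_div, ← one_div a, ← one_div (2:ℝ)]
    exact hpa
  have step4 : eLpNorm (fun x => ‖u x‖ ^ c * ‖fderiv ℝ u x‖) (ENNReal.ofReal p) volume ≤
      eLpNorm (fun x => ‖u x‖ ^ c) (ENNReal.ofReal a) volume *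
        eLpNorm (fun x => ‖fderiv ℝ u x‖) 2 volume := by
    have hT : ENNReal.HolderTriple _ _ _ := ⟨by simpa only [one_div] using hexps.symm⟩
    simpa only [ENNReal.coe_one, one_mul] using
      eLpNorm_le_eLpNorm_mul_eLpNorm'_of_norm hmeas1 hmeas2 (fun a b => a * b) 1
        (by filter_upwards with x; rw [NNReal.coe_one, one_mul, norm_mul])
  have e5 : eLpNorm (fun x : E2 => ‖u x‖ ^ c) (ENNReal.ofReal a) volume =
      eLpNorm u (ENNReal.ofReal (c*a)) volume ^ c := by
    rw [eLpNorm_norm_rpow u hc, ← ENNReal.ofReal_mul ha.le, mul_comm a c]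
  have T2 : eLpNorm (fderiv ℝ (fun x => fpow c (u x))) (ENNReal.ofReal p) volume ≤
      ENNReal.ofReal (c+1) * C2^c * Ntot u ^ (c+1) := by
    calc eLpNorm (fderiv ℝ (fun x => fpow c (u x))) (ENNReal.ofReal p) volume
        ≤ ENNReal.ofReal (c+1) *
          eLpNorm (fun x => ‖u x‖ ^ c * ‖fderiv ℝ u x‖) (ENNReal.ofReal p) volume := step3
      _ ≤ ENNReal.ofReal (c+1) * (eLpNorm (fun x => ‖u x‖ ^ c) (ENNReal.ofReal a) volume *
            eLpNorm (fun x => ‖fderiv ℝ u x‖) 2 volume) := by gcongr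
      _ = ENNReal.ofReal (c+1) * (eLpNorm u (ENNReal.ofReal (c*a)) volume ^ c *
            eLpNorm (fderiv ℝ u) 2 volume) := by rw [e5, eLpNorm_norm]
      _ ≤ ENNReal.ofReal (c+1) * ((C2 * Ntot u) ^ c * Ntot u) := by
          gcongr
          exact hC2b u hu h2u
      _ = ENNReal.ofReal (c+1) * C2^c * Ntot u ^ (c+1) := by
          rw [ENNReal.mul_rpow_of_nonneg _ _ hc.le,
            ENNReal.rpow_add_of_nonneg _ _ hc.le zero_le_one, ENNReal.rpow_one]
          ring
  calc eLpNorm (fun x => fpow c (u x)) (ENNReal.ofReal p) volume +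
        eLpNorm (fderiv ℝ (fun x => fpow c (u x))) (ENNReal.ofReal p) volume
      ≤ C1^(c+1) * Ntot u ^ (c+1) + ENNReal.ofReal (c+1) * C2^c * Ntot u ^ (c+1) :=
        add_le_add T1 T2
    _ = (C1^(c+1) + ENNReal.ofReal (c+1) * C2^c) * Ntot u ^ (c+1) := (add_mul _ _ _).symm

/-- Estimate of the power nonlinearity F(u) = |u|^(2σ)u in H^{1,p}(ℝ²). -/
theorem stmt11 (σ : ℝ) (hσ : 0 < σ) (p : ℝ)
    (hp : p = if σ < 1 / 2 then 2 / (2 * σ + 1) else 4 / 3) :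
    ∃ C > (0 : ℝ), ∀ u : EuclideanSpace ℝ (Fin 2) → ℂ,
      ContDiff ℝ 1 u → HasCompactSupport u →
      (eLpNorm (fun x => ((‖u x‖ ^ (2 * σ) : ℝ) : ℂ) * u x)
          (ENNReal.ofReal p) volume).toReal +
        (eLpNorm (fun x =>
            ‖fderiv ℝ (fun y => ((‖u y‖ ^ (2 * σ) : ℝ) : ℂ) * u y) x‖)
          (ENNReal.ofReal p) volume).toReal ≤
      C * ((eLpNorm u 2 volume).toReal +
            (eLpNorm (fun x => ‖fderiv ℝ u x‖) 2 volume).toReal) ^ (2 * σ + 1) := by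
  have hσ1 : (0:ℝ) < 2 * σ + 1 := by linarith
  -- choose the Hölder companion exponent
  set a : ℝ := if σ < 1/2 then 1/σ else 4 with hadef
  have hp0 : 0 < p := by
    rw [hp]; split_ifs <;> positivity
  have ha0 : 0 < a := by
    rw [hadef]; split_ifs <;> positivity
  have hpa : 1/p = 1/a + 1/2 := by
    rw [hp, hadef]; split_ifs with h
    · rw [one_div_div, one_div_one_div]
      field_simp
    · norm_num
  have hqF : 2 ≤ p * (2*σ + 1) := by
    rw [hp]; split_ifs with h
    · have : 2/(2*σ+1) * (2*σ+1) = 2 := by field_simp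
      rw [this]
    · push_neg at h
      nlinarith
  have hca : 2 ≤ (2*σ) * a := by
    rw [hadef]; split_ifs with h
    · have : (2*σ) * (1/σ) = 2 := by field_simp
      rw [this]
    · nlinarith
  obtain ⟨C, hCt, hCb⟩ := main_est (c := 2*σ) (a := a) (by positivity) hp0 ha0 hpa hqF hca
  refine ⟨C.toReal + 1, by positivity, fun u hu h2u => ?_⟩
  have hfun : (fun x : E2 => ((‖u x‖ ^ (2*σ) : ℝ) : ℂ) * u x) =
      (fun x => fpow (2*σ) (u x)) := by
    funext x; rw [fpow_eq_mul]
  rw [hfun, eLpNorm_norm]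
  have hσ2 : (0:ℝ) < 2*σ := by linarith
  have hv : ContDiff ℝ 1 (fun x => fpow (2*σ) (u x)) := contDiff_fpow_comp hσ2 hu
  have hvS : HasCompactSupport (fun x => fpow (2*σ) (u x)) := hasCompactSupport_fpow_comp h2u
  set A := eLpNorm (fun x => fpow (2*σ) (u x)) (ENNReal.ofReal p) volume with hA
  set B := eLpNorm (fderiv ℝ (fun x => fpow (2*σ) (u x))) (ENNReal.ofReal p) volume with hB
  set S2 := eLpNorm u 2 volume with hS2
  set G2 := eLpNorm (fderiv ℝ u) 2 volume with hG2
  have hmain : A + B ≤ C * Ntot u ^ (2*σ+1) := hCb u hu h2u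
  have hAne : A ≠ ⊤ :=
    (hv.continuous.memLp_of_hasCompactSupport hvS).eLpNorm_lt_top.ne
  have hBne : B ≠ ⊤ :=
    (((contDiff_one_iff_fderiv.mp hv).2).memLp_of_hasCompactSupport
      (hvS.fderiv (𝕜 := ℝ))).eLpNorm_lt_top.ne
  have hS2ne : S2 ≠ ⊤ := (hu.continuous.memLp_of_hasCompactSupport h2u).eLpNorm_lt_top.ne
  have hG2ne : G2 ≠ ⊤ :=
    (((contDiff_one_iff_fderiv.mp hu).2).memLp_of_hasCompactSupport
      (h2u.fderiv (𝕜 := ℝ))).eLpNorm_lt_top.ne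
  have hNt : Ntot u ≠ ⊤ := by
    rw [Ntot, ← hS2, ← hG2]
    exact ENNReal.add_ne_top.mpr ⟨hS2ne, hG2ne⟩
  have hRHSne : C * Ntot u ^ (2*σ+1) ≠ ⊤ :=
    ENNReal.mul_ne_top hCt (ENNReal.rpow_ne_top_of_nonneg hσ1.le hNt)
  have hNtoReal : (Ntot u).toReal = S2.toReal + G2.toReal := by
    rw [Ntot, ← hS2, ← hG2, ENNReal.toReal_add hS2ne hG2ne]
  rw [eLpNorm_norm]
  calc A.toReal + B.toReal = (A + B).toReal := (ENNReal.toReal_add hAne hBne).symm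
    _ ≤ (C * Ntot u ^ (2*σ+1)).toReal := ENNReal.toReal_mono hRHSne hmain
    _ = C.toReal * ((Ntot u).toReal) ^ (2*σ+1) := by
        rw [ENNReal.toReal_mul, ENNReal.toReal_rpow]
    _ = C.toReal * (S2.toReal + G2.toReal) ^ (2*σ+1) := by rw [hNtoReal]
    _ ≤ (C.toReal + 1) * (S2.toReal + G2.toReal) ^ (2*σ+1) := by
        have hb : (0:ℝ) ≤ (S2.toReal + G2.toReal) ^ (2*σ+1) := by positivity
        nlinarith [ENNReal.toReal_nonneg (a := C)]

end
end AnalPart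
end

section
/- Let 0 < σ ≤ 3/2 and set p = 6/(2σ+3). Then there exists a constant C > 0 such that for every continuously differentiable function u : ℝ³ → ℂ with compact support, writing F(u)(x) = |u(x)|^{2σ} u(x), one has ‖F(u)‖_{L^p} + ‖∇(F(u))‖_{L^p} ≤ C ( ‖u‖_{L²} + ‖∇u‖_{L²} )^{2σ+1}. -/
open MeasureTheory Complex Asymptotics
open scoped ENNReal NNReal

lemma abs_rpow_eq' (σ : ℝ) (w : ℂ) : ‖w‖ ^ (2*σ) = Complex.normSq w ^ σ := by
  rw [Real.rpow_mul (norm_nonneg _), Real.rpow_two, Complex.sq_norm]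

lemma key (σ : ℝ) (hσ : 0 < σ) (z : ℂ) :
    ∃ L : ℂ →L[ℝ] ℂ, HasFDerivAt (fun w => ((‖w‖ ^ (2*σ) : ℝ) : ℂ) * w) L z ∧
      ‖L‖ ≤ (2*σ+1) * ‖z‖ ^ (2*σ) := by
  rcases eq_or_ne z 0 with rfl | hz
  · refine ⟨0, ?_, by rw [norm_zero]; positivity⟩
    rw [hasFDerivAt_iff_isLittleO_nhds_zero]
    simp only [zero_add, map_zero, Real.zero_rpow (by positivity : (0:ℝ) < 2*σ).ne',
      Complex.ofReal_zero, zero_mul, mul_zero, sub_zero, ContinuousLinearMap.zero_apply]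
    rw [isLittleO_iff]
    intro c hc
    have ht : Filter.Tendsto (fun w : ℂ => ‖w‖ ^ (2*σ)) (nhds 0) (nhds 0) := by
      have h1 : ContinuousAt (fun t : ℝ => t ^ (2*σ)) (‖(0:ℂ)‖) := by
        rw [norm_zero]
        exact Real.continuousAt_rpow_const 0 (2*σ) (Or.inr (by positivity))
      have h2 := h1.comp (continuous_norm.continuousAt (x := (0:ℂ)))
      simpa [ContinuousAt, Function.comp_def, map_zero,
        Real.zero_rpow (by positivity : (0:ℝ) < 2*σ).ne'] using h2
    filter_upwards [ht.eventually_lt_const hc] with w hw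
    calc ‖((‖w‖ ^ (2*σ) : ℝ) : ℂ) * w‖ = ‖w‖ ^ (2*σ) * ‖w‖ := by
          rw [norm_mul, Complex.norm_real, Real.norm_of_nonneg (by positivity)]
      _ ≤ c * ‖w‖ := mul_le_mul_of_nonneg_right hw.le (norm_nonneg _)
  · have ha : 0 < ‖z‖ := norm_pos_iff.mpr hz
    have hrpnn : (0:ℝ) ≤ Complex.normSq z ^ (σ - 1) :=
      Real.rpow_nonneg (Complex.normSq_nonneg z) _
    have hσnn : (0:ℝ) ≤ σ * Complex.normSq z ^ (σ - 1) := mul_nonneg hσ.le hrpnn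
    have hns : HasFDerivAt Complex.normSq
        ((z.re • Complex.reCLM + z.re • Complex.reCLM) +
          (z.im • Complex.imCLM + z.im • Complex.imCLM)) z := by
      have hre : HasFDerivAt (fun w : ℂ => w.re) Complex.reCLM z :=
        Complex.reCLM.hasFDerivAt
      have him : HasFDerivAt (fun w : ℂ => w.im) Complex.imCLM z :=
        Complex.imCLM.hasFDerivAt
      have := (hre.mul hre).add (him.mul him)
      exact this.congr_of_eventuallyEq (Filter.Eventually.of_forall fun w => by simp [Complex.normSq_apply])
    set N := ((z.re • Complex.reCLM + z.re • Complex.reCLM) +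
          (z.im • Complex.imCLM + z.im • Complex.imCLM)) with hN
    have hnz : Complex.normSq z ≠ 0 := by
      simpa [Complex.normSq_eq_zero] using hz
    have hφ : HasFDerivAt (fun w => Complex.normSq w ^ σ)
        ((σ * Complex.normSq z ^ (σ - 1)) • N) z := hns.rpow_const (Or.inl hnz)
    have hc : HasFDerivAt (fun w => ((Complex.normSq w ^ σ : ℝ) : ℂ))
        (Complex.ofRealCLM.comp ((σ * Complex.normSq z ^ (σ - 1)) • N)) z :=
      Complex.ofRealCLM.hasFDerivAt.comp z hφ
    have hmul := hc.mul (hasFDerivAt_id z)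
    set L := (((Complex.normSq z ^ σ : ℝ) : ℂ)) • ContinuousLinearMap.id ℝ ℂ +
        z • (Complex.ofRealCLM.comp ((σ * Complex.normSq z ^ (σ - 1)) • N)) with hL
    refine ⟨L, ?_, ?_⟩
    · have heq : (fun w => ((‖w‖ ^ (2*σ) : ℝ) : ℂ) * w)
          = fun w => ((Complex.normSq w ^ σ : ℝ) : ℂ) * w := by
        funext w; rw [abs_rpow_eq']
      rw [heq]
      exact hmul
    · refine ContinuousLinearMap.opNorm_le_bound _
        (mul_nonneg (by linarith) (Real.rpow_nonneg (norm_nonneg _) _)) fun w => ?_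
      have hLw : L w = ((Complex.normSq z ^ σ : ℝ) : ℂ) * w
          + z * ((σ * Complex.normSq z ^ (σ - 1)) * (N w) : ℝ) := by
        simp [hL, smul_eq_mul]
      have hNw : |N w| ≤ 2 * (‖z‖ * ‖w‖) := by
        have h1 : N w = 2 * (((starRingEnd ℂ) z * w).re) := by
          simp [hN, Complex.mul_re]; ring
        rw [h1, _root_.abs_mul, _root_.abs_of_nonneg (by norm_num : (0:ℝ) ≤ 2)]
        have h3 := Complex.abs_re_le_norm ((starRingEnd ℂ) z * w)
        rw [norm_mul, Complex.norm_conj] at h3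
        nlinarith [norm_nonneg ((starRingEnd ℂ) z * w)]
      have h2 : Complex.normSq z ^ (σ - 1) * (‖z‖ * ‖z‖)
          = ‖z‖ ^ (2*σ) := by
        rw [show ‖z‖ * ‖z‖ = ‖z‖ ^ (2:ℝ) by
          rw [Real.rpow_two]; ring]
        rw [Complex.normSq_eq_norm_sq, ← Real.rpow_two, ← Real.rpow_mul ha.le,
          ← Real.rpow_add ha]
        ring_nf
      calc ‖L w‖ ≤ ‖((Complex.normSq z ^ σ : ℝ) : ℂ) * w‖
            + ‖z * ((σ * Complex.normSq z ^ (σ - 1)) * (N w) : ℝ)‖ := by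
            rw [hLw]; exact norm_add_le _ _
        _ ≤ Complex.normSq z ^ σ * ‖w‖
            + ‖z‖ * (σ * Complex.normSq z ^ (σ - 1) * |N w|) := by
            simp only [norm_mul, Complex.norm_real, Real.norm_eq_abs]
            rw [_root_.abs_of_nonneg (Real.rpow_nonneg (Complex.normSq_nonneg z) σ),
              _root_.abs_of_nonneg hσ.le, _root_.abs_of_nonneg hrpnn]
        _ ≤ ‖z‖ ^ (2*σ) * ‖w‖
            + ‖z‖ * (σ * Complex.normSq z ^ (σ - 1)
                * (2 * (‖z‖ * ‖w‖))) := by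
            rw [← abs_rpow_eq']
            have := mul_le_mul_of_nonneg_left hNw hσnn
            have := mul_le_mul_of_nonneg_left this ha.le
            linarith
        _ = (2*σ+1) * ‖z‖ ^ (2*σ) * ‖w‖ := by
            rw [← h2]; ring

/-- Estimate of the power nonlinearity F(u) = |u|^(2σ)u in H^{1,p}(ℝ³) with p = 6/(2σ+3). -/
theorem stmt12 (σ : ℝ) (hσ1 : 0 < σ) (hσ2 : σ ≤ 3 / 2) (p : ℝ)
    (hp : p = 6 / (2 * σ + 3)) :
    ∃ C > (0 : ℝ), ∀ u : EuclideanSpace ℝ (Fin 3) → ℂ,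
      ContDiff ℝ 1 u → HasCompactSupport u →
      (eLpNorm (fun x => ((‖u x‖ ^ (2 * σ) : ℝ) : ℂ) * u x)
          (ENNReal.ofReal p) volume).toReal +
        (eLpNorm (fun x =>
            ‖fderiv ℝ (fun y => ((‖u y‖ ^ (2 * σ) : ℝ) : ℂ) * u y) x‖)
          (ENNReal.ofReal p) volume).toReal ≤
      C * ((eLpNorm u 2 volume).toReal +
            (eLpNorm (fun x => ‖fderiv ℝ u x‖) 2 volume).toReal) ^ (2 * σ + 1) := by
  have hppos : 0 < p := by rw [hp]; positivity
  set P := ENNReal.ofReal p with hP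
  set Q := ENNReal.ofReal (3/σ) with hQ
  -- Sobolev constant
  set K : ℝ≥0∞ := ((SNormLESNormFDerivOfEqConst ℂ
      (volume : Measure (EuclideanSpace ℝ (Fin 3))) (((2:ℝ≥0)):ℝ) : ℝ≥0) : ℝ≥0∞) with hK
  set R : ℝ≥0∞ := K ^ (2*σ) * ENNReal.ofReal (2*σ+1) with hR
  have hKtop : K ≠ ⊤ := ENNReal.coe_ne_top
  have hRtop : R ≠ ⊤ := by
    rw [hR]
    exact ENNReal.mul_ne_top (ENNReal.rpow_ne_top_of_nonneg (by positivity) hKtop)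
      ENNReal.ofReal_ne_top
  refine ⟨R.toReal + 1, by positivity, fun u hu h2u => ?_⟩
  have hu_c : Continuous u := hu.continuous
  have hdu_c : Continuous (fderiv ℝ u) := hu.continuous_fderiv (by norm_num)
  have habs_c : Continuous fun x => ‖u x‖ ^ (2*σ) := by
    rw [continuous_iff_continuousAt]
    intro x
    exact (Real.continuousAt_rpow_const _ _ (Or.inr (by positivity))).comp
      (continuous_norm.continuousAt.comp hu_c.continuousAt)
  -- exponent relation
  have hpqr : 1 / P = 1 / Q + 1 / 2 := by
    have h3σ : (0:ℝ) < 3/σ := by positivity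
    have h2 : (2:ℝ≥0∞) = ENNReal.ofReal 2 := by simp
    simp only [one_div, hP, hQ, h2]
    rw [← ENNReal.ofReal_inv_of_pos hppos, ← ENNReal.ofReal_inv_of_pos h3σ,
      ← ENNReal.ofReal_inv_of_pos (by norm_num : (0:ℝ) < 2),
      ← ENNReal.ofReal_add (by positivity) (by norm_num)]
    congr 1
    rw [hp]
    field_simp
    ring
  -- the L^6 norm of u to the power 2σ
  have h6 : eLpNorm (fun x => ‖u x‖ ^ (2*σ)) Q volume
      = eLpNorm u 6 volume ^ (2*σ) := by
    have := eLpNorm_norm_rpow (p := Q) (μ := (volume : Measure (EuclideanSpace ℝ (Fin 3))))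
      u (by positivity : (0:ℝ) < 2*σ)
    rw [this]
    congr 1
    rw [hQ, ← ENNReal.ofReal_mul (by positivity)]
    rw [show 3/σ * (2*σ) = 6 by field_simp; ring]
    simp
  -- Sobolev inequality
  have hSob : eLpNorm u 6 volume ≤ K * eLpNorm (fderiv ℝ u) 2 volume := by
    have hfr : 0 < Module.finrank ℝ (EuclideanSpace ℝ (Fin 3)) := by
      simp [finrank_euclideanSpace]
    have h := eLpNorm_le_eLpNorm_fderiv_of_eq
      (μ := (volume : Measure (EuclideanSpace ℝ (Fin 3)))) hu h2u
      (p := 2) (p' := 6) (by norm_num) hfr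
      (by simp [finrank_euclideanSpace]; norm_num)
    simpa [hK] using h
  -- pointwise derivative bound
  have hder : ∀ x, ‖fderiv ℝ (fun y => ((‖u y‖ ^ (2*σ) : ℝ) : ℂ) * u y) x‖
      ≤ ‖(((2*σ+1) * ‖u x‖ ^ (2*σ)) • fderiv ℝ u x : _)‖ := by
    intro x
    obtain ⟨L, hL, hLn⟩ := key σ hσ1 (u x)
    have hcomp : HasFDerivAt (fun y => ((‖u y‖ ^ (2*σ) : ℝ) : ℂ) * u y)
        (L.comp (fderiv ℝ u x)) x :=
      hL.comp x (hu.differentiable (by norm_num) x).hasFDerivAt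
    rw [hcomp.fderiv,
      norm_smul ((2*σ+1) * ‖u x‖ ^ (2*σ)) (fderiv ℝ u x), Real.norm_eq_abs,
      _root_.abs_of_nonneg (by positivity : (0:ℝ) ≤ (2*σ+1) * ‖u x‖ ^ (2*σ))]
    calc ‖L.comp (fderiv ℝ u x)‖ ≤ ‖L‖ * ‖fderiv ℝ u x‖ := ContinuousLinearMap.opNorm_comp_le _ _
      _ ≤ (2*σ+1) * ‖u x‖ ^ (2*σ) * ‖fderiv ℝ u x‖ :=
        mul_le_mul_of_nonneg_right hLn (norm_nonneg _)
  -- Term 1 Hölder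
  have hT1 : eLpNorm (fun x => ((‖u x‖ ^ (2*σ) : ℝ) : ℂ) * u x) P volume
      ≤ eLpNorm u 6 volume ^ (2*σ) * eLpNorm u 2 volume := by
    rw [← h6]
    refine (eLpNorm_le_eLpNorm_mul_eLpNorm'_of_norm
      (habs_c.aestronglyMeasurable) (hu_c.aestronglyMeasurable)
      (fun (a : ℝ) (w : ℂ) => (a : ℂ) * w) 1 ?_ (hpqr := ⟨by simpa only [one_div] using hpqr.symm⟩)).trans_eq (by rw [ENNReal.coe_one, one_mul])
    filter_upwards with x
    rw [norm_mul, Complex.norm_real, NNReal.coe_one, one_mul]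
  -- Term 2 Hölder
  have hT2 : eLpNorm (fun x =>
        ‖fderiv ℝ (fun y => ((‖u y‖ ^ (2*σ) : ℝ) : ℂ) * u y) x‖) P volume
      ≤ eLpNorm u 6 volume ^ (2*σ)
        * (ENNReal.ofReal (2*σ+1) * eLpNorm (fderiv ℝ u) 2 volume) := by
    calc eLpNorm (fun x =>
          ‖fderiv ℝ (fun y => ((‖u y‖ ^ (2*σ) : ℝ) : ℂ) * u y) x‖) P volume
        ≤ eLpNorm (fun x => ((2*σ+1) * ‖u x‖ ^ (2*σ)) • fderiv ℝ u x) P volume := by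
          refine eLpNorm_mono fun x => ?_
          rw [norm_norm]
          exact hder x
      _ ≤ eLpNorm (fun x => (2*σ+1) * ‖u x‖ ^ (2*σ)) Q volume
            * eLpNorm (fderiv ℝ u) 2 volume := by
          refine (eLpNorm_le_eLpNorm_mul_eLpNorm'_of_norm
            ((continuous_const.mul habs_c).aestronglyMeasurable)
            (hdu_c.aestronglyMeasurable)
            (fun (a : ℝ) M => a • M) 1 ?_ (hpqr := ⟨by simpa only [one_div] using hpqr.symm⟩)).trans_eq (by rw [ENNReal.coe_one, one_mul]; rfl)
          filter_upwards with x
          rw [NNReal.coe_one, one_mul]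
          exact le_of_eq (norm_smul ((2*σ+1) * ‖u x‖ ^ (2*σ)) (fderiv ℝ u x))
      _ ≤ (ENNReal.ofReal (2*σ+1) * eLpNorm (fun x => ‖u x‖ ^ (2*σ)) Q volume)
            * eLpNorm (fderiv ℝ u) 2 volume := by
          have : (fun x => (2*σ+1) * ‖u x‖ ^ (2*σ))
              = (2*σ+1) • (fun x => ‖u x‖ ^ (2*σ)) := by
            funext x; simp [smul_eq_mul]
          rw [this, eLpNorm_const_smul, ← ofReal_norm_eq_enorm,
            Real.norm_of_nonneg (by positivity)]
      _ = eLpNorm u 6 volume ^ (2*σ)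
            * (ENNReal.ofReal (2*σ+1) * eLpNorm (fderiv ℝ u) 2 volume) := by
          rw [h6]; ring
  -- combine
  set S2 := eLpNorm u 2 volume with hS2
  set D2 := eLpNorm (fderiv ℝ u) 2 volume with hD2
  set S6 := eLpNorm u 6 volume with hS6'
  set M := S2 + D2 with hM
  set c : ℝ≥0∞ := ENNReal.ofReal (2*σ+1) with hc
  have hfinS2 : S2 ≠ ⊤ :=
    (hu_c.memLp_of_hasCompactSupport (μ := volume) (p := 2) h2u).eLpNorm_ne_top
  have hfinD2 : D2 ≠ ⊤ :=
    (hdu_c.memLp_of_hasCompactSupport (μ := volume) (p := 2) (h2u.fderiv (𝕜 := ℝ))).eLpNorm_ne_top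
  have hMtop : M ≠ ⊤ := ENNReal.add_ne_top.mpr ⟨hfinS2, hfinD2⟩
  have hone : (1:ℝ≥0∞) ≤ c := by
    rw [hc, show (1:ℝ≥0∞) = ENNReal.ofReal 1 by simp]
    exact ENNReal.ofReal_le_ofReal (by linarith)
  have hS6M : S6 ^ (2*σ) ≤ K ^ (2*σ) * M ^ (2*σ) := by
    calc S6 ^ (2*σ) ≤ (K * M) ^ (2*σ) := by
          refine ENNReal.rpow_le_rpow ?_ (by positivity)
          exact hSob.trans (mul_le_mul_right le_add_self K)
      _ = K ^ (2*σ) * M ^ (2*σ) := ENNReal.mul_rpow_of_nonneg _ _ (by positivity)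
  set A1 := eLpNorm (fun x => ((‖u x‖ ^ (2*σ) : ℝ) : ℂ) * u x) P volume with hA1
  set A2 := eLpNorm (fun x =>
      ‖fderiv ℝ (fun y => ((‖u y‖ ^ (2*σ) : ℝ) : ℂ) * u y) x‖) P volume with hA2
  have hfinal : A1 + A2 ≤ R * M ^ (2*σ+1) := by
    calc A1 + A2 ≤ S6 ^ (2*σ) * S2 + S6 ^ (2*σ) * (c * D2) := add_le_add hT1 hT2
      _ ≤ S6 ^ (2*σ) * (c * S2) + S6 ^ (2*σ) * (c * D2) := by
          gcongr
          exact le_mul_of_one_le_left' hone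
      _ = S6 ^ (2*σ) * c * M := by rw [hM]; ring
      _ ≤ (K ^ (2*σ) * M ^ (2*σ)) * c * M := by gcongr
      _ = R * (M ^ (2*σ) * M ^ (1:ℝ)) := by rw [hR, ENNReal.rpow_one]; ring
      _ = R * M ^ (2*σ+1) := by rw [← ENNReal.rpow_add_of_nonneg _ _ (by positivity) zero_le_one]
  have hRHSfin : R * M ^ (2*σ+1) ≠ ⊤ :=
    ENNReal.mul_ne_top hRtop (ENNReal.rpow_ne_top_of_nonneg (by positivity) hMtop)
  have hA1top : A1 ≠ ⊤ := ((le_add_right le_rfl).trans hfinal).trans_lt hRHSfin.lt_top |>.ne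
  have hA2top : A2 ≠ ⊤ := ((le_add_left le_rfl).trans hfinal).trans_lt hRHSfin.lt_top |>.ne
  rw [eLpNorm_norm (fderiv ℝ u)]
  rw [← ENNReal.toReal_add hA1top hA2top, ← ENNReal.toReal_add hfinS2 hfinD2]
  calc (A1 + A2).toReal ≤ (R * M ^ (2*σ+1)).toReal := ENNReal.toReal_mono hRHSfin hfinal
    _ = R.toReal * M.toReal ^ (2*σ+1) := by
        rw [ENNReal.toReal_mul, ENNReal.toReal_rpow]
    _ ≤ (R.toReal + 1) * M.toReal ^ (2*σ+1) := by
        have hXnn : (0:ℝ) ≤ M.toReal ^ (2*σ+1) := Real.rpow_nonneg ENNReal.toReal_nonneg _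
        nlinarith [ENNReal.toReal_nonneg (a := R)]
end
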